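/- arXiv:1105.5422 — 4 statements merged into one kernel-verified Lean document; each statement's English description precedes it below -/
import Mathlib

section
/- Infinite Girth Criterion: Let G be a group acting on a set X, generated by a finite set {γ₁, …, γₙ}. Suppose there exist elements σ, τ ∈ G, subsets U_σ, U_τ ⊆ X, and a point x ∈ X such that: (1) x does not lie in (U_σ ∪ U_τ) ∪ ⋃_{ε=±1} ⋃_{i=1}^{n} γᵢ^ε(U_σ ∪ U_τ); (2) for every nonzero integer k, σ^k({x} ∪ U_τ ∪ ⋃_{ε=±1} ⋃_{i=1}^{n} γᵢ^ε(U_τ)) ⊆ U_σ; and (3) for every nonzero integer k, τ^k({x} ∪ U_σ ∪ ⋃_{ε=±1} ⋃_{i=1}^{n} γᵢ^ε(U_σ)) ⊆ U_τ. Then G is not a cyclic group and G has infinite girth. -/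
open Pointwise

/-- A nonempty reduced word in the letters `S ∪ S⁻¹` (no letter immediately followed by
its inverse) that represents the identity element of the group. -/
def IsRelatorWord {G : Type*} [Group G] (S : Set G) (w : List G) : Prop :=
  w ≠ [] ∧ (∀ g ∈ w, g ∈ S ∨ g⁻¹ ∈ S) ∧ List.Chain' (fun a b => b ≠ a⁻¹) w ∧ w.prod = 1

/-- The girth `U(G,S)` of the Cayley graph of `G` with respect to `S`: the infimum in `ℕ∞`
of the lengths of nonempty reduced words in the letters `S ∪ S⁻¹` representing `1`. -/
noncomputable def girthWith {G : Type*} [Group G] (S : Set G) : ℕ∞ :=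
  ⨅ w ∈ {w : List G | IsRelatorWord S w}, (w.length : ℕ∞)

/-- The girth `U(G)` of a group `G`: the supremum of `U(G,S)` over all finite
generating sets `S` of `G`. -/
noncomputable def groupGirth (G : Type*) [Group G] : ℕ∞ :=
  ⨆ S ∈ {S : Finset G | Subgroup.closure (S : Set G) = ⊤}, girthWith (S : Set G)

section PingPongAux

variable {G X : Type*} [Group G] [MulAction G X]
def SideInv {n : ℕ} (σ : G) (A : Fin n → G) (M : Fin n → ℤ) (D : Set X) (x : X)
    (w : List G) : Prop :=
  ∃ e d : ℤ, ∃ p : X, |d| ≤ (w.length : ℤ) ∧ p ∈ D ∧ w.prod • x = σ ^ e • p ∧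
    ((e = d ∧ ((0 < d ∧ w.head? = some σ) ∨ (d < 0 ∧ w.head? = some σ⁻¹))) ∨
     (∃ j, e = M j + d ∧
       ((d = 0 ∧ w.head? = some (A j)) ∨ (0 < d ∧ w.head? = some σ) ∨
        (d < 0 ∧ w.head? = some σ⁻¹))))

theorem pp_aux_ne (Mj d m : ℤ) (h1 : m ≤ |Mj|) (h2 : |d| < m) : Mj + d ≠ 0 := by
  rcases abs_cases Mj with ⟨h3, h4⟩ | ⟨h3, h4⟩ <;> rcases abs_cases d with ⟨h5, h6⟩ | ⟨h5, h6⟩ <;>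
    omega

set_option linter.unusedSectionVars false in
theorem sideInv_exp_ne {n : ℕ} {σ : G} {A : Fin n → G} {M : Fin n → ℤ}
    {w : List G} {m e d : ℤ}
    (hM : ∀ i, m ≤ |M i|) (hlen : (w.length : ℤ) < m) (hd : |d| ≤ (w.length : ℤ))
    (hk : (e = d ∧ ((0 < d ∧ w.head? = some σ) ∨ (d < 0 ∧ w.head? = some σ⁻¹))) ∨
     (∃ j, e = M j + d ∧
       ((d = 0 ∧ w.head? = some (A j)) ∨ (0 < d ∧ w.head? = some σ) ∨
        (d < 0 ∧ w.head? = some σ⁻¹)))) : e ≠ 0 := by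
  rcases hk with ⟨rfl, ⟨h, -⟩ | ⟨h, -⟩⟩ | ⟨j, rfl, -⟩
  · omega
  · omega
  · exact pp_aux_ne _ _ m (hM j) (lt_of_le_of_lt hd hlen)

theorem side_step {n : ℕ} (m : ℤ) (σ τ : G) (γ' A : Fin n → G) (M : Fin n → ℤ)
    (U V D E : Set X) (x : X)
    (hA : ∀ i, A i = σ ^ M i * γ' i * τ ^ M i)
    (hresσ : ∀ e : ℤ, e ≠ 0 → ∀ p ∈ D, σ ^ e • p ∈ U)
    (hresτ : ∀ e : ℤ, e ≠ 0 → ∀ p ∈ E, τ ^ e • p ∈ V)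
    (hUE : U ⊆ E)
    (hγD : ∀ i, γ' i • V ⊆ D)
    (hγE : ∀ i, (γ' i)⁻¹ • U ⊆ E)
    (hM : ∀ i, m ≤ |M i|) (hMM : ∀ i j, i ≠ j → m ≤ |M i - M j|)
    (ℓ : G) (rest : List G) (hlen : (rest.length : ℤ) < m)
    (hℓ : ℓ = σ ∨ ℓ = σ⁻¹ ∨ ℓ = τ ∨ ℓ = τ⁻¹ ∨ (∃ i, ℓ = A i) ∨ (∃ i, ℓ = (A i)⁻¹))
    (hchain : ∀ b ∈ rest.head?, b ≠ ℓ⁻¹)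
    (h : SideInv σ A M D x rest) :
    SideInv σ A M D x (ℓ :: rest) ∨
      SideInv τ (fun i => (A i)⁻¹) (fun i => -M i) E x (ℓ :: rest) := by
  obtain ⟨e, d, p, hd, hp, hval, hk⟩ := h
  have hdm : |d| < m := lt_of_le_of_lt hd hlen
  have hdl : -(rest.length : ℤ) ≤ d ∧ d ≤ (rest.length : ℤ) := abs_le.mp hd
  have he : e ≠ 0 := sideInv_exp_ne hM hlen hd hk
  have hvc : (ℓ :: rest).prod • x = ℓ • (σ ^ e • p) := by
    rw [List.prod_cons, mul_smul, hval]
  have hlc : ((ℓ :: rest).length : ℤ) = (rest.length : ℤ) + 1 := by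
    rw [List.length_cons]; push_cast; ring
  rcases hℓ with hl | hl | hl | hl | ⟨i, hl⟩ | ⟨i, hl⟩
  · -- ℓ = σ
    left
    have hval' : (ℓ :: rest).prod • x = σ ^ (1 + e) • p := by
      rw [hvc, hl, smul_smul, zpow_add, zpow_one]
    have hhd : (ℓ :: rest).head? = some σ := by rw [List.head?_cons, hl]
    rcases hk with ⟨he', ⟨hd0, hhead⟩ | ⟨hd0, hhead⟩⟩ | ⟨j, he', hsub⟩
    · exact ⟨1 + e, 1 + e, p, by rw [hlc, abs_le]; omega, hp, hval',
        Or.inl ⟨rfl, Or.inl ⟨by omega, hhd⟩⟩⟩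
    · exact absurd (by rw [hl]) (hchain σ⁻¹ (Option.mem_def.mpr hhead))
    · rcases hsub with ⟨hd0, hhead⟩ | ⟨hd0, hhead⟩ | ⟨hd0, hhead⟩
      · exact ⟨1 + e, 1 + d, p, by rw [hlc, abs_le]; omega, hp, hval',
          Or.inr ⟨j, by omega, Or.inr (Or.inl ⟨by omega, hhd⟩)⟩⟩
      · exact ⟨1 + e, 1 + d, p, by rw [hlc, abs_le]; omega, hp, hval',
          Or.inr ⟨j, by omega, Or.inr (Or.inl ⟨by omega, hhd⟩)⟩⟩
      · exact absurd (by rw [hl]) (hchain σ⁻¹ (Option.mem_def.mpr hhead))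
  · -- ℓ = σ⁻¹
    left
    have hval' : (ℓ :: rest).prod • x = σ ^ (-1 + e) • p := by
      rw [hvc, hl, smul_smul, zpow_add, zpow_neg_one]
    have hhd : (ℓ :: rest).head? = some σ⁻¹ := by rw [List.head?_cons, hl]
    have hcontra : σ = ℓ⁻¹ := by rw [hl, inv_inv]
    rcases hk with ⟨he', ⟨hd0, hhead⟩ | ⟨hd0, hhead⟩⟩ | ⟨j, he', hsub⟩
    · exact absurd hcontra (hchain σ (Option.mem_def.mpr hhead))
    · exact ⟨-1 + e, -1 + e, p, by rw [hlc, abs_le]; omega, hp, hval',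
        Or.inl ⟨rfl, Or.inr ⟨by omega, hhd⟩⟩⟩
    · rcases hsub with ⟨hd0, hhead⟩ | ⟨hd0, hhead⟩ | ⟨hd0, hhead⟩
      · exact ⟨-1 + e, -1 + d, p, by rw [hlc, abs_le]; omega, hp, hval',
          Or.inr ⟨j, by omega, Or.inr (Or.inr ⟨by omega, hhd⟩)⟩⟩
      · exact absurd hcontra (hchain σ (Option.mem_def.mpr hhead))
      · exact ⟨-1 + e, -1 + d, p, by rw [hlc, abs_le]; omega, hp, hval',
          Or.inr ⟨j, by omega, Or.inr (Or.inr ⟨by omega, hhd⟩)⟩⟩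
  · -- ℓ = τ
    right
    exact ⟨1, 1, σ ^ e • p, by rw [hlc, abs_le]; omega, hUE (hresσ e he p hp),
      by rw [hvc, hl, zpow_one], Or.inl ⟨rfl, Or.inl ⟨one_pos, by rw [List.head?_cons, hl]⟩⟩⟩
  · -- ℓ = τ⁻¹
    right
    exact ⟨-1, -1, σ ^ e • p, by rw [hlc, abs_le]; omega, hUE (hresσ e he p hp),
      by rw [hvc, hl, zpow_neg_one], Or.inl ⟨rfl, Or.inr ⟨by omega, by rw [List.head?_cons, hl]⟩⟩⟩
  · -- ℓ = A i
    left
    have hMi : M i ≠ 0 := by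
      have := hM i; rcases abs_cases (M i) with ⟨h3, h4⟩ | ⟨h3, h4⟩ <;> omega
    refine ⟨M i, 0, γ' i • (τ ^ M i • (σ ^ e • p)), by rw [hlc, abs_le]; omega,
      hγD i (Set.smul_mem_smul_set (hresτ _ hMi _ (hUE (hresσ e he p hp)))), ?_,
      Or.inr ⟨i, by ring, Or.inl ⟨rfl, by rw [List.head?_cons, hl]⟩⟩⟩
    rw [hvc, hl, hA i, mul_smul, mul_smul]
  · -- ℓ = (A i)⁻¹
    right
    have hcontra : A i = ℓ⁻¹ := by rw [hl, inv_inv]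
    have hne : -M i + e ≠ 0 := by
      rcases hk with ⟨he', -⟩ | ⟨j, he', hsub⟩
      · rw [he']
        exact pp_aux_ne (-M i) d m (by rw [abs_neg]; exact hM i) hdm
      · rcases eq_or_ne i j with rfl | hij
        · have hd0 : d ≠ 0 := by
            rcases hsub with ⟨hd0, hhead⟩ | ⟨h', -⟩ | ⟨h', -⟩
            · exact absurd hcontra (hchain (A i) (Option.mem_def.mpr hhead))
            · omega
            · omega
          omega
        · have h' : -M i + (M j + d) = (M j - M i) + d := by ring
          rw [he', h']
          exact pp_aux_ne (M j - M i) d m (by rw [abs_sub_comm]; exact hMM i j hij) hdm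
    have hinner : σ ^ (-M i) • (σ ^ e • p) = σ ^ (-M i + e) • p := by
      rw [smul_smul, ← zpow_add]
    refine ⟨-M i, 0, (γ' i)⁻¹ • (σ ^ (-M i + e) • p), by rw [hlc, abs_le]; omega,
      hγE i (Set.smul_mem_smul_set (hresσ _ hne p hp)), ?_,
      Or.inr ⟨i, by show -M i = -M i + 0; ring, Or.inl ⟨rfl, by rw [List.head?_cons, hl]⟩⟩⟩
    rw [hvc, hl, hA i, mul_inv_rev, mul_inv_rev, ← zpow_neg, ← zpow_neg, mul_smul, mul_smul,
      hinner]
theorem side_base {n : ℕ} (m : ℤ) (σ τ : G) (γ' A : Fin n → G) (M : Fin n → ℤ)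
    (V D E : Set X) (x : X)
    (hA : ∀ i, A i = σ ^ M i * γ' i * τ ^ M i)
    (hresτ : ∀ e : ℤ, e ≠ 0 → ∀ p ∈ E, τ ^ e • p ∈ V)
    (hγD : ∀ i, γ' i • V ⊆ D)
    (hM : ∀ i, m ≤ |M i|) (hm : 1 ≤ m)
    (hxD : x ∈ D) (hxE : x ∈ E)
    (ℓ : G) (hℓ : ℓ = σ ∨ ℓ = σ⁻¹ ∨ ∃ i, ℓ = A i) :
    SideInv σ A M D x [ℓ] := by
  rcases hℓ with rfl | rfl | ⟨i, rfl⟩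
  · exact ⟨1, 1, x, by simp, hxD, by simp [List.prod_singleton, zpow_one],
      Or.inl ⟨rfl, Or.inl ⟨one_pos, rfl⟩⟩⟩
  · refine ⟨-1, -1, x, by simp, hxD, ?_, Or.inl ⟨rfl, Or.inr ⟨by omega, rfl⟩⟩⟩
    simp [List.prod_singleton, zpow_neg_one]
  · have hMi : M i ≠ 0 := by
      have := hM i; rcases abs_cases (M i) with ⟨h3, h4⟩ | ⟨h3, h4⟩ <;> omega
    refine ⟨M i, 0, γ' i • (τ ^ M i • x), by simp, hγD i
      (Set.smul_mem_smul_set (hresτ _ hMi x hxE)), ?_,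
      Or.inr ⟨i, by ring, Or.inl ⟨rfl, rfl⟩⟩⟩
    rw [List.prod_singleton, hA i, mul_smul, mul_smul]
theorem ping_key {n : ℕ} (m : ℤ) (σ τ : G) (γ' A : Fin n → G) (M : Fin n → ℤ)
    (U V D E : Set X) (x : X)
    (hA : ∀ i, A i = σ ^ M i * γ' i * τ ^ M i)
    (hresσ : ∀ e : ℤ, e ≠ 0 → ∀ p ∈ D, σ ^ e • p ∈ U)
    (hresτ : ∀ e : ℤ, e ≠ 0 → ∀ p ∈ E, τ ^ e • p ∈ V)
    (hUE : U ⊆ E) (hVD : V ⊆ D)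
    (hγD : ∀ i, γ' i • V ⊆ D)
    (hγE : ∀ i, (γ' i)⁻¹ • U ⊆ E)
    (hM : ∀ i, m ≤ |M i|) (hMM : ∀ i j, i ≠ j → m ≤ |M i - M j|) (hm : 1 ≤ m)
    (hxD : x ∈ D) (hxE : x ∈ E)
    (w : List G) :
    w ≠ [] → (w.length : ℤ) < m →
    (∀ g ∈ w, g = σ ∨ g = σ⁻¹ ∨ g = τ ∨ g = τ⁻¹ ∨ (∃ i, g = A i) ∨ (∃ i, g = (A i)⁻¹)) →
    List.Chain' (fun a b => b ≠ a⁻¹) w →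
    SideInv σ A M D x w ∨ SideInv τ (fun i => (A i)⁻¹) (fun i => -M i) E x w := by
  have hA' : ∀ i, (A i)⁻¹ = τ ^ (-M i) * (γ' i)⁻¹ * σ ^ (-M i) := by
    intro i; rw [hA i]; group
  have hγD' : ∀ i, ((γ' i)⁻¹)⁻¹ • V ⊆ D := by intro i; rw [inv_inv]; exact hγD i
  have hM' : ∀ i, m ≤ |-M i| := by intro i; rw [abs_neg]; exact hM i
  have hMM' : ∀ i j, i ≠ j → m ≤ |(-M i) - (-M j)| := by
    intro i j hij
    rw [show (-M i) - (-M j) = -(M i - M j) by ring, abs_neg]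
    exact hMM i j hij
  induction w with
  | nil => intro hw _ _ _; exact absurd rfl hw
  | cons ℓ rest ih =>
    intro hw hwl hletters hchain
    have hchain' := List.isChain_cons.mp hchain
    have hℓ := hletters ℓ List.mem_cons_self
    have hrl : (rest.length : ℤ) < m := by
      rw [List.length_cons] at hwl; push_cast at hwl ⊢; omega
    rcases eq_or_ne rest [] with rfl | hrest
    · rcases hℓ with hl | hl | hl | hl | ⟨i, hl⟩ | ⟨i, hl⟩
      · exact Or.inl (side_base m σ τ γ' A M V D E x hA hresτ hγD hM hm hxD hxE ℓ (Or.inl hl))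
      · exact Or.inl (side_base m σ τ γ' A M V D E x hA hresτ hγD hM hm hxD hxE ℓ
          (Or.inr (Or.inl hl)))
      · exact Or.inr (side_base m τ σ (fun i => (γ' i)⁻¹) (fun i => (A i)⁻¹) (fun i => -M i)
          U E D x hA' hresσ hγE hM' hm hxE hxD ℓ (Or.inl hl))
      · exact Or.inr (side_base m τ σ (fun i => (γ' i)⁻¹) (fun i => (A i)⁻¹) (fun i => -M i)
          U E D x hA' hresσ hγE hM' hm hxE hxD ℓ (Or.inr (Or.inl hl)))
      · exact Or.inl (side_base m σ τ γ' A M V D E x hA hresτ hγD hM hm hxD hxE ℓ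
          (Or.inr (Or.inr ⟨i, hl⟩)))
      · exact Or.inr (side_base m τ σ (fun i => (γ' i)⁻¹) (fun i => (A i)⁻¹) (fun i => -M i)
          U E D x hA' hresσ hγE hM' hm hxE hxD ℓ (Or.inr (Or.inr ⟨i, hl⟩)))
    · have hih := ih hrest hrl (fun g hg => hletters g (List.mem_cons_of_mem _ hg)) hchain'.2
      rcases hih with hside | hside
      · exact side_step m σ τ γ' A M U V D E x hA hresσ hresτ hUE hγD hγE hM hMM ℓ rest hrl hℓ
          hchain'.1 hside
      · have hℓ' : ℓ = τ ∨ ℓ = τ⁻¹ ∨ ℓ = σ ∨ ℓ = σ⁻¹ ∨ (∃ i, ℓ = (A i)⁻¹) ∨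
            (∃ i, ℓ = ((A i)⁻¹)⁻¹) := by
          rcases hℓ with h | h | h | h | ⟨i, h⟩ | ⟨i, h⟩
          · exact Or.inr (Or.inr (Or.inl h))
          · exact Or.inr (Or.inr (Or.inr (Or.inl h)))
          · exact Or.inl h
          · exact Or.inr (Or.inl h)
          · exact Or.inr (Or.inr (Or.inr (Or.inr (Or.inr ⟨i, by rw [inv_inv]; exact h⟩))))
          · exact Or.inr (Or.inr (Or.inr (Or.inr (Or.inl ⟨i, h⟩))))
        have hstep := side_step m τ σ (fun i => (γ' i)⁻¹) (fun i => (A i)⁻¹) (fun i => -M i)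
          V U E D x hA' hresτ hresσ hVD hγE hγD' hM' hMM' ℓ rest hrl hℓ' hchain'.1 hside
        rcases hstep with h | h
        · exact Or.inr h
        · left
          have hAA : (fun i => ((fun i => (A i)⁻¹) i)⁻¹) = A := by funext i; simp
          have hM0 : (fun i => -((fun i => -M i) i)) = M := by funext i; simp
          rwa [hAA, hM0] at h

theorem sideInv_resolve {n : ℕ} {σ : G} {A : Fin n → G} {M : Fin n → ℤ} {D U : Set X} {x : X}
    {w : List G} {m : ℤ}
    (hres : ∀ e : ℤ, e ≠ 0 → ∀ p ∈ D, σ ^ e • p ∈ U)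
    (hM : ∀ i, m ≤ |M i|) (hlen : (w.length : ℤ) < m)
    (h : SideInv σ A M D x w) : w.prod • x ∈ U := by
  obtain ⟨e, d, p, hd, hp, hval, hk⟩ := h
  rw [hval]
  exact hres e (sideInv_exp_ne hM hlen hd hk) p hp

end PingPongAux

/-- **Infinite Girth Criterion.** -/
theorem infinite_girth_criterion {G X : Type*} [Group G] [MulAction G X]
    (n : ℕ) (γ : Fin n → G) (hgen : Subgroup.closure (Set.range γ) = ⊤)
    (σ τ : G) (Uσ Uτ : Set X) (x : X)
    (h1 : x ∉ (Uσ ∪ Uτ) ∪ ⋃ i, (γ i • (Uσ ∪ Uτ) ∪ (γ i)⁻¹ • (Uσ ∪ Uτ)))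
    (h2 : ∀ k : ℤ, k ≠ 0 →
      (σ ^ k) • ({x} ∪ Uτ ∪ ⋃ i, (γ i • Uτ ∪ (γ i)⁻¹ • Uτ)) ⊆ Uσ)
    (h3 : ∀ k : ℤ, k ≠ 0 →
      (τ ^ k) • ({x} ∪ Uσ ∪ ⋃ i, (γ i • Uσ ∪ (γ i)⁻¹ • Uσ)) ⊆ Uτ) :
    ¬ IsCyclic G ∧ groupGirth G = ⊤ := by
  classical
  set Dσ : Set X := {x} ∪ Uτ ∪ ⋃ i, (γ i • Uτ ∪ (γ i)⁻¹ • Uτ) with hDσdef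
  set Dτ : Set X := {x} ∪ Uσ ∪ ⋃ i, (γ i • Uσ ∪ (γ i)⁻¹ • Uσ) with hDτdef
  have hresσ : ∀ e : ℤ, e ≠ 0 → ∀ p ∈ Dσ, σ ^ e • p ∈ Uσ :=
    fun e he p hp => h2 e he (Set.smul_mem_smul_set hp)
  have hresτ : ∀ e : ℤ, e ≠ 0 → ∀ p ∈ Dτ, τ ^ e • p ∈ Uτ :=
    fun e he p hp => h3 e he (Set.smul_mem_smul_set hp)
  have hUσDτ : Uσ ⊆ Dτ := fun p hp => Set.mem_union_left _ (Set.mem_union_right _ hp)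
  have hUτDσ : Uτ ⊆ Dσ := fun p hp => Set.mem_union_left _ (Set.mem_union_right _ hp)
  have hγD : ∀ i, γ i • Uτ ⊆ Dσ := fun i p hp =>
    Set.mem_union_right _ (Set.mem_iUnion.mpr ⟨i, Set.mem_union_left _ hp⟩)
  have hγE : ∀ i, (γ i)⁻¹ • Uσ ⊆ Dτ := fun i p hp =>
    Set.mem_union_right _ (Set.mem_iUnion.mpr ⟨i, Set.mem_union_right _ hp⟩)
  have hxD : x ∈ Dσ := Set.mem_union_left _ (Set.mem_union_left _ rfl)
  have hxE : x ∈ Dτ := Set.mem_union_left _ (Set.mem_union_left _ rfl)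
  have hxUσ : x ∉ Uσ := fun h => h1 (Set.mem_union_left _ (Set.mem_union_left _ h))
  have hxUτ : x ∉ Uτ := fun h => h1 (Set.mem_union_left _ (Set.mem_union_right _ h))
  constructor
  · -- not cyclic
    intro hc
    obtain ⟨g, hg⟩ := hc.exists_generator
    obtain ⟨a, ha⟩ := Subgroup.mem_zpowers_iff.mp (hg σ)
    obtain ⟨b, hb⟩ := Subgroup.mem_zpowers_iff.mp (hg τ)
    have hcomm : σ * τ = τ * σ := by
      rw [← ha, ← hb, ← zpow_add, ← zpow_add, add_comm]
    have s1 : τ ^ (-1 : ℤ) • x ∈ Uτ := hresτ (-1) (by norm_num) x hxE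
    have s2 : σ ^ (-1 : ℤ) • (τ ^ (-1 : ℤ) • x) ∈ Uσ := hresσ (-1) (by norm_num) _ (hUτDσ s1)
    have s3 : τ ^ (1 : ℤ) • (σ ^ (-1 : ℤ) • (τ ^ (-1 : ℤ) • x)) ∈ Uτ :=
      hresτ 1 one_ne_zero _ (hUσDτ s2)
    have s4 : σ ^ (1 : ℤ) • (τ ^ (1 : ℤ) • (σ ^ (-1 : ℤ) • (τ ^ (-1 : ℤ) • x))) ∈ Uσ :=
      hresσ 1 one_ne_zero _ (hUτDσ s3)
    have hone : σ * τ * σ⁻¹ * τ⁻¹ = 1 := by rw [hcomm]; group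
    have heq : (σ * τ * σ⁻¹ * τ⁻¹) • x =
        σ ^ (1 : ℤ) • (τ ^ (1 : ℤ) • (σ ^ (-1 : ℤ) • (τ ^ (-1 : ℤ) • x))) := by
      rw [zpow_one, zpow_one, zpow_neg_one, zpow_neg_one, mul_smul, mul_smul, mul_smul]
    have : (σ * τ * σ⁻¹ * τ⁻¹) • x ∈ Uσ := by rw [heq]; exact s4
    rw [hone, one_smul] at this
    exact hxUσ this
  · -- infinite girth
    have main : ∀ m : ℤ, 1 ≤ m → ∃ S : Finset G, Subgroup.closure (S : Set G) = ⊤ ∧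
        ∀ w : List G, IsRelatorWord (S : Set G) w → m ≤ (w.length : ℤ) := by
      intro m hm
      set M : Fin n → ℤ := fun i => m * (((i : ℕ) : ℤ) + 2) with hMdef
      set A : Fin n → G := fun i => σ ^ M i * γ i * τ ^ M i with hAdef
      have hMge : ∀ i : Fin n, m ≤ M i := by
        intro i
        have h0 : (0 : ℤ) ≤ ((i : ℕ) : ℤ) := Int.natCast_nonneg _
        calc m = m * 1 := (mul_one m).symm
          _ ≤ m * (((i : ℕ) : ℤ) + 2) := by
              apply mul_le_mul_of_nonneg_left (by omega) (by omega)
      have hM : ∀ i, m ≤ |M i| := by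
        intro i
        rw [abs_of_nonneg (le_trans (by omega) (hMge i))]
        exact hMge i
      have hMM : ∀ i j, i ≠ j → m ≤ |M i - M j| := by
        intro i j hij
        have hv : (i : ℕ) ≠ (j : ℕ) := fun hh => hij (Fin.ext hh)
        have hz : ((i : ℕ) : ℤ) ≠ ((j : ℕ) : ℤ) := by exact_mod_cast hv
        have hdiff : M i - M j = m * (((i : ℕ) : ℤ) - ((j : ℕ) : ℤ)) := by
          simp only [hMdef]; ring
        have h1' : 1 ≤ |((i : ℕ) : ℤ) - ((j : ℕ) : ℤ)| :=
          Int.one_le_abs (sub_ne_zero.mpr hz)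
        rw [hdiff, abs_mul, abs_of_nonneg (by omega : (0:ℤ) ≤ m)]
        calc m = m * 1 := (mul_one m).symm
          _ ≤ m * |((i : ℕ) : ℤ) - ((j : ℕ) : ℤ)| :=
              mul_le_mul_of_nonneg_left h1' (by omega)
      refine ⟨{σ, τ} ∪ Finset.image A Finset.univ, ?_, ?_⟩
      · -- generates
        rw [eq_top_iff, ← hgen]
        rw [Subgroup.closure_le]
        rintro g ⟨i, rfl⟩
        have hσS : σ ∈ Subgroup.closure
            ((({σ, τ} ∪ Finset.image A Finset.univ : Finset G)) : Set G) :=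
          Subgroup.subset_closure (by simp)
        have hτS : τ ∈ Subgroup.closure
            ((({σ, τ} ∪ Finset.image A Finset.univ : Finset G)) : Set G) :=
          Subgroup.subset_closure (by simp)
        have hAS : A i ∈ Subgroup.closure
            ((({σ, τ} ∪ Finset.image A Finset.univ : Finset G)) : Set G) :=
          Subgroup.subset_closure (by simp)
        have hγeq : γ i = (σ ^ M i)⁻¹ * A i * (τ ^ M i)⁻¹ := by
          simp only [hAdef]; group
        rw [hγeq]
        exact mul_mem (mul_mem (inv_mem (zpow_mem hσS _)) hAS) (inv_mem (zpow_mem hτS _))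
      · -- girth bound
        intro w hw
        by_contra hlt
        push_neg at hlt
        obtain ⟨hne, hmemw, hch, hprod⟩ := hw
        have hletters : ∀ g ∈ w, g = σ ∨ g = σ⁻¹ ∨ g = τ ∨ g = τ⁻¹ ∨
            (∃ i, g = A i) ∨ (∃ i, g = (A i)⁻¹) := by
          intro g hg
          rcases hmemw g hg with h | h
          · simp only [Finset.coe_union, Finset.coe_insert, Finset.coe_singleton,
              Finset.coe_image, Finset.coe_univ, Set.image_univ, Set.mem_union,
              Set.mem_insert_iff, Set.mem_singleton_iff, Set.mem_range] at h
            rcases h with (h | h) | ⟨i, h⟩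
            · exact Or.inl h
            · exact Or.inr (Or.inr (Or.inl h))
            · exact Or.inr (Or.inr (Or.inr (Or.inr (Or.inl ⟨i, h.symm⟩))))
          · simp only [Finset.coe_union, Finset.coe_insert, Finset.coe_singleton,
              Finset.coe_image, Finset.coe_univ, Set.image_univ, Set.mem_union,
              Set.mem_insert_iff, Set.mem_singleton_iff, Set.mem_range] at h
            rcases h with (h | h) | ⟨i, h⟩
            · exact Or.inr (Or.inl (by rw [← h, inv_inv]))
            · exact Or.inr (Or.inr (Or.inr (Or.inl (by rw [← h, inv_inv]))))
            · exact Or.inr (Or.inr (Or.inr (Or.inr (Or.inr ⟨i, by rw [h, inv_inv]⟩))))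
        have hAeq : ∀ i, A i = σ ^ M i * γ i * τ ^ M i := fun i => rfl
        have hM' : ∀ i, m ≤ |(fun i => -M i) i| := by
          intro i; simp only []; rw [abs_neg]; exact hM i
        have hmain := ping_key m σ τ γ A M Uσ Uτ Dσ Dτ x hAeq hresσ hresτ hUσDτ hUτDσ
          hγD hγE hM hMM hm hxD hxE w hne hlt hletters hch
        rcases hmain with h | h
        · have hin := sideInv_resolve hresσ hM hlt h
          rw [hprod, one_smul] at hin
          exact hxUσ hin
        · have hin := sideInv_resolve hresτ hM' hlt h
          rw [hprod, one_smul] at hin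
          exact hxUτ hin
    have hbig : ∀ k : ℕ, (k : ℕ∞) ≤ groupGirth G := by
      intro k
      obtain ⟨S, hSgen, hSbound⟩ := main ((k : ℤ) + 1) (by omega)
      have hle : (k : ℕ∞) ≤ girthWith (S : Set G) := by
        refine le_iInf₂ fun w hw => ?_
        have hb := hSbound w hw
        have hk : k ≤ w.length := by
          have : (k : ℤ) < (w.length : ℤ) := by omega
          exact_mod_cast le_of_lt this
        exact_mod_cast Nat.cast_le.mpr hk
      refine le_trans hle ?_
      have hg : groupGirth G =
          ⨆ S ∈ {S : Finset G | Subgroup.closure (S : Set G) = ⊤}, girthWith (S : Set G) := rfl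
      rw [hg]
      exact le_iSup₂_of_le S hSgen le_rfl
    rcases eq_or_ne (groupGirth G) ⊤ with h | h
    · exact h
    · obtain ⟨k, hk⟩ := WithTop.ne_top_iff_exists.mp h
      have hb := hbig (k + 1)
      rw [← hk] at hb
      have hb' : ((k + 1 : ℕ) : ℕ∞) ≤ ((k : ℕ) : ℕ∞) := hb
      rw [Nat.cast_le] at hb'
      omega
end

section
/- If a finitely generated group G contains a finite-index subgroup H that is finitely generated and has finite girth, then G has finite girth. -/
open Pointwise

namespace GirthAux

open scoped Classical
set_option linter.unusedSectionVars false

variable {G : Type*} [Group G]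

/-- reverse of the letterwise inverse of a word -/
def inv1 (l : List G) : List G := (l.map fun x => x⁻¹).reverse

@[simp] lemma inv1_nil : inv1 ([] : List G) = [] := rfl

lemma inv1_cons (a : G) (l : List G) : inv1 (a :: l) = inv1 l ++ [a⁻¹] := by
  simp [inv1]

@[simp] lemma inv1_length (l : List G) : (inv1 l).length = l.length := by simp [inv1]

lemma inv1_prod (l : List G) : (inv1 l).prod = l.prod⁻¹ := by
  induction l with
  | nil => simp
  | cons a l ih => simp [inv1_cons, ih, mul_inv_rev]

lemma mem_inv1 {l : List G} {x : G} (hx : x ∈ inv1 l) : x⁻¹ ∈ l := by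
  simp only [inv1, List.mem_reverse, List.mem_map] at hx
  obtain ⟨y, hy, rfl⟩ := hx
  simpa using hy

/-- one step of free-style reduction: delete an adjacent pair of mutually
inverse letters -/
def RStep (W W' : List G) : Prop :=
  ∃ (X Z : List G) (a : G), W = X ++ a :: a⁻¹ :: Z ∧ W' = X ++ Z

/-- iterated reduction -/
def RedTo : List G → List G → Prop := Relation.ReflTransGen RStep

lemma RedTo.refl (W : List G) : RedTo W W := Relation.ReflTransGen.refl

lemma RStep.prod_eq {W W' : List G} (h : RStep W W') : W.prod = W'.prod := by
  obtain ⟨X, Z, a, rfl, rfl⟩ := h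
  simp

lemma RedTo.prod_eq {W W' : List G} (h : RedTo W W') : W.prod = W'.prod := by
  induction h with
  | refl => rfl
  | tail _ h ih => exact ih.trans h.prod_eq

lemma RStep.mem {W W' : List G} (h : RStep W W') {x : G} (hx : x ∈ W') : x ∈ W := by
  obtain ⟨X, Z, a, rfl, rfl⟩ := h
  simp only [List.mem_append] at hx ⊢
  rcases hx with h | h
  · exact Or.inl h
  · exact Or.inr (by simp [h])

lemma RedTo.mem {W W' : List G} (h : RedTo W W') {x : G} (hx : x ∈ W') : x ∈ W := by
  induction h with
  | refl => exact hx
  | tail _ h ih => exact ih (h.mem hx)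

lemma RedTo.length_le {W W' : List G} (h : RedTo W W') : W'.length ≤ W.length := by
  induction h with
  | refl => exact le_refl _
  | tail _ h ih =>
      obtain ⟨X, Z, a, rfl, rfl⟩ := h
      simp at ih ⊢
      omega

lemma not_chain'_split {R : G → G → Prop} {l : List G} (h : ¬ l.Chain' R) :
    ∃ (X Z : List G) (a b : G), l = X ++ a :: b :: Z ∧ ¬ R a b := by
  induction l with
  | nil => exact absurd List.isChain_nil h
  | cons a l ih =>
      match l with
      | [] => exact absurd (List.isChain_singleton a) h
      | b :: t =>
          simp only [List.Chain', List.isChain_cons_cons] at h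
          by_cases hab : R a b
          · have ht : ¬ (b :: t).Chain' R := fun hc => h ⟨hab, hc⟩
            obtain ⟨X, Z, x, y, heq, hxy⟩ := ih ht
            exact ⟨a :: X, Z, x, y, by simp [heq], hxy⟩
          · exact ⟨[], t, a, b, rfl, hab⟩

/-- every word reduces to a reduced word -/
lemma exists_reduct (W : List G) :
    ∃ V, RedTo W V ∧ V.Chain' (fun a b => b ≠ a⁻¹) := by
  generalize hn : W.length = n
  induction n using Nat.strong_induction_on generalizing W with
  | _ n ih =>
    by_cases hc : W.Chain' (fun a b => b ≠ a⁻¹)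
    · exact ⟨W, RedTo.refl W, hc⟩
    · obtain ⟨X, Z, a, b, rfl, hab⟩ := not_chain'_split hc
      push_neg at hab
      subst hab
      have hst : RStep (X ++ a :: a⁻¹ :: Z) (X ++ Z) := ⟨X, Z, a, rfl, rfl⟩
      have hlen : (X ++ Z).length < n := by simp at hn ⊢; omega
      obtain ⟨V, hV, hVc⟩ := ih _ hlen (X ++ Z) rfl
      exact ⟨V, Relation.ReflTransGen.head hst hV, hVc⟩

lemma chain'_no_rstep {W W' : List G} (hc : W.Chain' (fun a b => b ≠ a⁻¹))
    (h : RStep W W') : False := by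
  obtain ⟨X, Z, a, rfl, _⟩ := h
  have := (List.isChain_append.mp hc).2.1
  rw [List.isChain_cons_cons] at this
  exact this.1 rfl

lemma eq_nil_of_reduced_redto_nil {W : List G}
    (hc : W.Chain' (fun a b => b ≠ a⁻¹)) (h : RedTo W []) : W = [] := by
  rcases (Relation.ReflTransGen.cases_head h) with h | ⟨c, hst, _⟩
  · exact h
  · exact (chain'_no_rstep hc hst).elim

/-- delete all occurrences of `1` -/
noncomputable def del1 : List G → List G
  | [] => []
  | a :: l => if a = (1 : G) then del1 l else a :: del1 l

@[simp] lemma del1_nil : del1 ([] : List G) = [] := rfl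

lemma del1_cons (a : G) (l : List G) :
    del1 (a :: l) = if a = 1 then del1 l else a :: del1 l := by
  rw [del1]

lemma del1_append (l₁ l₂ : List G) : del1 (l₁ ++ l₂) = del1 l₁ ++ del1 l₂ := by
  induction l₁ with
  | nil => simp
  | cons a l ih =>
      rw [List.cons_append, del1_cons, del1_cons]
      split <;> simp [ih]

lemma del1_prod (l : List G) : (del1 l).prod = l.prod := by
  induction l with
  | nil => rfl
  | cons a l ih =>
      rw [del1_cons]
      split
      · simp [*]
      · simp [ih]

lemma mem_del1 {l : List G} {x : G} (h : x ∈ del1 l) : x ∈ l ∧ x ≠ 1 := by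
  induction l with
  | nil => simp [del1] at h
  | cons a l ih =>
      rw [del1_cons] at h
      split at h
      · exact ⟨List.mem_cons_of_mem _ (ih h).1, (ih h).2⟩
      · rcases List.mem_cons.mp h with rfl | h'
        · exact ⟨List.mem_cons_self, by assumption⟩
        · exact ⟨List.mem_cons_of_mem _ (ih h').1, (ih h').2⟩

lemma del1_eq_nil {l : List G} (h : ∀ x ∈ l, x = 1) : del1 l = [] := by
  induction l with
  | nil => rfl
  | cons a l ih =>
      rw [del1_cons, if_pos (h a (List.mem_cons_self))]
      exact ih fun x hx => h x (List.mem_cons_of_mem _ hx)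

lemma del1_inv1 (l : List G) : del1 (inv1 l) = inv1 (del1 l) := by
  induction l with
  | nil => rfl
  | cons a l ih =>
      rw [inv1_cons, del1_append, del1_cons, ih]
      by_cases ha : a = 1
      · simp [ha, del1_cons]
      · have : a⁻¹ ≠ 1 := fun h => ha (by simpa using congrArg Inv.inv h)
        rw [del1_cons, if_neg this, if_neg ha, inv1_cons]
        simp [del1]

lemma del1_rstep {W W' : List G} (h : RStep W W') : RedTo (del1 W) (del1 W') := by
  obtain ⟨X, Z, a, rfl, rfl⟩ := h
  rw [del1_append, del1_append, del1_cons, del1_cons]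
  by_cases ha : a = 1
  · have : a⁻¹ = 1 := by simp [ha]
    rw [if_pos ha, if_pos this]
    exact RedTo.refl _
  · have hai : a⁻¹ ≠ 1 := fun h => ha (by simpa using congrArg Inv.inv h)
    rw [if_neg ha, if_neg hai]
    exact Relation.ReflTransGen.single ⟨del1 X, del1 Z, a, rfl, rfl⟩

lemma del1_redto {W W' : List G} (h : RedTo W W') : RedTo (del1 W) (del1 W') := by
  induction h with
  | refl => exact RedTo.refl _
  | tail _ h ih => exact ih.trans (del1_rstep h)


section Tau
/-- Schreier rewriting of a word, relative to a coset-representative map `R`,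
starting at position `c`. -/
def tau (R : G → G) : G → List G → List G
  | _, [] => []
  | c, a :: l => (R c * a * (R (c * a))⁻¹) :: tau R (c * a) l

variable (R : G → G)

@[simp] lemma tau_nil (c : G) : tau R c [] = [] := rfl

lemma tau_cons (c a : G) (l : List G) :
    tau R c (a :: l) = (R c * a * (R (c * a))⁻¹) :: tau R (c * a) l := rfl

lemma tau_length (c : G) (l : List G) : (tau R c l).length = l.length := by
  induction l generalizing c with
  | nil => rfl
  | cons a l ih => simp [tau_cons, ih]

lemma tau_append (c : G) (X Z : List G) :
    tau R c (X ++ Z) = tau R c X ++ tau R (c * X.prod) Z := by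
  induction X generalizing c with
  | nil => simp
  | cons a X ih =>
      simp only [List.cons_append, tau_cons, ih (c * a), List.prod_cons, mul_assoc]

lemma tau_prod (c : G) (l : List G) :
    (tau R c l).prod = R c * l.prod * (R (c * l.prod))⁻¹ := by
  induction l generalizing c with
  | nil => simp
  | cons a l ih =>
      simp only [tau_cons, List.prod_cons, ih (c * a), mul_assoc]
      group

lemma tau_mem (c : G) (l : List G) {x : G} (hx : x ∈ tau R c l) :
    ∃ d a, a ∈ l ∧ x = R d * a * (R (d * a))⁻¹ := by
  induction l generalizing c with
  | nil => simp at hx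
  | cons a l ih =>
      rcases List.mem_cons.mp hx with rfl | hx'
      · exact ⟨c, a, List.mem_cons_self, rfl⟩
      · obtain ⟨d, b, hb, hx⟩ := ih (c * a) hx'
        exact ⟨d, b, List.mem_cons_of_mem _ hb, hx⟩

lemma tau_rstep {W W' : List G} (c : G) (h : RStep W W') :
    RStep (tau R c W) (tau R c W') := by
  obtain ⟨X, Z, a, rfl, rfl⟩ := h
  rw [tau_append, tau_append, tau_cons, tau_cons]
  refine ⟨tau R c X, tau R (c * X.prod) Z, R (c * X.prod) * a * (R (c * X.prod * a))⁻¹, ?_, rfl⟩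
  have h1 : c * X.prod * a * a⁻¹ = c * X.prod := by group
  rw [h1]
  congr 1
  congr 1
  group

lemma tau_redto {W W' : List G} (c : G) (h : RedTo W W') :
    RedTo (tau R c W) (tau R c W') := by
  induction h with
  | refl => exact Relation.ReflTransGen.refl
  | tail _ h ih => exact ih.trans (Relation.ReflTransGen.single (tau_rstep R c h))

lemma tau_inv1 (c : G) (u : List G) :
    tau R c (inv1 u) = inv1 (tau R (c * u.prod⁻¹) u) := by
  induction u generalizing c with
  | nil => simp [inv1]
  | cons a l ih =>
      have e2 : c * (a :: l).prod⁻¹ = c * l.prod⁻¹ * a⁻¹ := by rw [List.prod_cons]; group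
      rw [e2, inv1_cons, tau_append, ih c, inv1_prod,
        tau_cons R (c * l.prod⁻¹ * a⁻¹) a l, inv1_cons, tau_cons, tau_nil]
      have e1 : c * l.prod⁻¹ * a⁻¹ * a = c * l.prod⁻¹ := by group
      rw [e1, mul_inv_rev, mul_inv_rev, inv_inv]
      simp [mul_assoc]

variable {H : Subgroup G}

lemma tau_congr (hR : ∀ (h x : G), h ∈ H → R (h * x) = R x)
    {c d : G} (hcd : c * d⁻¹ ∈ H) (l : List G) : tau R c l = tau R d l := by
  induction l generalizing c d with
  | nil => rfl
  | cons a l ih =>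
      rw [tau_cons, tau_cons]
      have h1 : R c = R d := by
        have := hR (c * d⁻¹) d hcd; rwa [inv_mul_cancel_right] at this
      have h2 : R (c * a) = R (d * a) := by
        have := hR (c * d⁻¹) (d * a) hcd
        rwa [show c * d⁻¹ * (d * a) = c * a by group] at this
      rw [h1, h2, ih (show (c * a) * (d * a)⁻¹ ∈ H by
        rwa [show (c * a) * (d * a)⁻¹ = c * d⁻¹ by group])]

lemma tau_all_one (u : List G) (c : G)
    (hu : ∀ p v : List G, u = p ++ v → R (c * p.prod) = c * p.prod) :
    ∀ x ∈ tau R c u, x = 1 := by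
  induction u generalizing c with
  | nil => simp
  | cons a l ih =>
      intro x hx
      rcases List.mem_cons.mp hx with rfl | hx'
      · have h0 : R c = c := by simpa using hu [] (a :: l) rfl
        have h1 : R (c * a) = c * a := by simpa using hu [a] l rfl
        rw [h0, h1]; group
      · refine ih (c * a) (fun p v hpv => ?_) x hx'
        have := hu (a :: p) v (by simp [hpv])
        simpa [mul_assoc] using this


end Tau

def Aset (S : Finset G) : Set G := {g | g ∈ S ∨ g⁻¹ ∈ S}

lemma Aset_inv {S : Finset G} {x : G} (hx : x ∈ Aset S) : x⁻¹ ∈ Aset S := by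
  rcases hx with h | h
  · exact Or.inr (by simpa using h)
  · exact Or.inl h

lemma Aset_finite (S : Finset G) : (Aset S).Finite := by
  have : Aset S ⊆ (S : Set G) ∪ (fun x : G => x⁻¹) ⁻¹' (S : Set G) := by
    rintro x (h | h)
    · exact Or.inl h
    · exact Or.inr h
  exact Set.Finite.subset (S.finite_toSet.union
    (S.finite_toSet.preimage (Set.injOn_of_injective inv_injective))) this

abbrev Qr (H : Subgroup G) := Quotient (QuotientGroup.rightRel H)

def qmk (H : Subgroup G) (g : G) : Qr H := Quotient.mk (QuotientGroup.rightRel H) g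

lemma qmk_eq_iff {H : Subgroup G} {x y : G} : qmk H x = qmk H y ↔ y * x⁻¹ ∈ H := by
  constructor
  · intro h
    exact QuotientGroup.rightRel_apply.mp (Quotient.exact h)
  · intro h
    exact Quotient.sound (QuotientGroup.rightRel_apply.mpr h)

def qmul (H : Subgroup G) (q : Qr H) (a : G) : Qr H :=
  Quotient.map (fun x => x * a) (fun x y hxy => by
    have h1 : y * x⁻¹ ∈ H := QuotientGroup.rightRel_apply.mp hxy
    exact QuotientGroup.rightRel_apply.mpr
      (by rwa [show y * a * (x * a)⁻¹ = y * x⁻¹ by group])) q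

lemma qmul_mk (H : Subgroup G) (x a : G) : qmul H (qmk H x) a = qmk H (x * a) := rfl

lemma exists_word (S : Finset G) (hS : Subgroup.closure (S : Set G) = ⊤) (g : G) :
    ∃ l : List G, (∀ x ∈ l, x ∈ Aset S) ∧ l.prod = g := by
  have hg : g ∈ Subgroup.closure (S : Set G) := hS ▸ Subgroup.mem_top g
  induction hg using Subgroup.closure_induction with
  | mem x hx => exact ⟨[x], by simpa [Aset] using Or.inl (Finset.mem_coe.mp hx), by simp⟩
  | one => exact ⟨[], by simp, by simp⟩
  | mul x y _ _ ihx ihy =>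
      obtain ⟨l₁, h₁, p₁⟩ := ihx
      obtain ⟨l₂, h₂, p₂⟩ := ihy
      refine ⟨l₁ ++ l₂, ?_, by simp [p₁, p₂]⟩
      intro z hz
      rcases List.mem_append.mp hz with h | h
      · exact h₁ z h
      · exact h₂ z h
  | inv x _ ihx =>
      obtain ⟨l, h, p⟩ := ihx
      exact ⟨inv1 l, fun z hz => by simpa using Aset_inv (h _ (mem_inv1 hz)),
        by rw [inv1_prod, p]⟩

section Reps

variable (H : Subgroup G) (S : Finset G) (hS : Subgroup.closure (S : Set G) = ⊤)
include hS

lemma dist_ex (q : Qr H) : ∃ k : ℕ, ∃ l : List G,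
    l.length ≤ k ∧ (∀ x ∈ l, x ∈ Aset S) ∧ qmk H l.prod = q := by
  obtain ⟨l, hl, hp⟩ := exists_word S hS q.out
  exact ⟨l.length, l, le_rfl, hl, by rw [hp]; exact q.out_eq⟩

noncomputable def dst (q : Qr H) : ℕ := Nat.find (dist_ex H S hS q)

lemma dst_spec (q : Qr H) : ∃ l : List G,
    l.length ≤ dst H S hS q ∧ (∀ x ∈ l, x ∈ Aset S) ∧ qmk H l.prod = q :=
  Nat.find_spec (dist_ex H S hS q)

lemma dst_le {q : Qr H} {k : ℕ} (h : ∃ l : List G,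
    l.length ≤ k ∧ (∀ x ∈ l, x ∈ Aset S) ∧ qmk H l.prod = q) :
    dst H S hS q ≤ k := Nat.find_le h

lemma dst_one : dst H S hS (qmk H 1) = 0 :=
  Nat.le_zero.mp (dst_le H S hS ⟨[], by simp, by simp, by simp [qmk]⟩)

lemma eq_one_of_dst_zero {q : Qr H} (h : dst H S hS q = 0) : q = qmk H 1 := by
  obtain ⟨l, hl, _, hq⟩ := dst_spec H S hS q
  rw [h, Nat.le_zero, List.length_eq_zero_iff] at hl
  subst hl
  simpa using hq.symm

lemma parent_ex (q : Qr H) (hq : q ≠ qmk H 1) :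
    ∃ pa : Qr H × G, pa.2 ∈ Aset S ∧ dst H S hS pa.1 < dst H S hS q ∧
      qmul H pa.1 pa.2 = q := by
  obtain ⟨l, hlen, hA, hq'⟩ := dst_spec H S hS q
  rcases List.eq_nil_or_concat' l with rfl | ⟨l', a, rfl⟩
  · exact absurd (by simpa using hq'.symm) hq
  · refine ⟨(qmk H l'.prod, a), hA a (by simp), ?_, ?_⟩
    · show dst H S hS (qmk H l'.prod) < dst H S hS q
      have h1 : dst H S hS (qmk H l'.prod) ≤ l'.length :=
        dst_le H S hS ⟨l', le_rfl, fun x hx => hA x (by simp [hx]), rfl⟩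
      have h2 : dst H S hS q ≠ 0 := fun h0 => hq (eq_one_of_dst_zero H S hS h0)
      have h3 : l'.length + 1 ≤ dst H S hS q := by simpa using hlen
      omega
    · show qmul H (qmk H l'.prod) a = q
      rw [qmul_mk]
      rw [show (l' ++ [a]).prod = l'.prod * a by simp] at hq'
      exact hq'

noncomputable def Wrd (q : Qr H) : List G :=
  if hq : q = qmk H 1 then [] else
    Wrd (parent_ex H S hS q hq).choose.1 ++ [(parent_ex H S hS q hq).choose.2]
  termination_by dst H S hS q
  decreasing_by exact (parent_ex H S hS q hq).choose_spec.2.1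

lemma Wrd_one : Wrd H S hS (qmk H 1) = [] := by rw [Wrd, dif_pos rfl]

lemma Wrd_letters (q : Qr H) : ∀ x ∈ Wrd H S hS q, x ∈ Aset S := by
  generalize hd : dst H S hS q = d
  induction d using Nat.strong_induction_on generalizing q with
  | _ d ih =>
    by_cases hq : q = qmk H 1
    · rw [hq, Wrd_one]; simp
    · rw [Wrd, dif_neg hq]
      intro x hx
      obtain ⟨hA, hlt, _⟩ := (parent_ex H S hS q hq).choose_spec
      rcases List.mem_append.mp hx with h | h
      · exact ih _ (hd ▸ hlt) _ rfl x h
      · rw [List.mem_singleton] at h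
        exact h ▸ hA

lemma Wrd_prod_mk (q : Qr H) : qmk H (Wrd H S hS q).prod = q := by
  generalize hd : dst H S hS q = d
  induction d using Nat.strong_induction_on generalizing q with
  | _ d ih =>
    by_cases hq : q = qmk H 1
    · rw [hq, Wrd_one]; simp [qmk]
    · rw [Wrd, dif_neg hq]
      obtain ⟨_, hlt, hmul⟩ := (parent_ex H S hS q hq).choose_spec
      rw [List.prod_append, List.prod_singleton, ← qmul_mk,
        ih _ (hd ▸ hlt) _ rfl, hmul]

lemma Wrd_length (q : Qr H) : (Wrd H S hS q).length ≤ dst H S hS q := by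
  generalize hd : dst H S hS q = d
  induction d using Nat.strong_induction_on generalizing q with
  | _ d ih =>
    by_cases hq : q = qmk H 1
    · rw [hq, Wrd_one]
      simp
    · rw [Wrd, dif_neg hq]
      obtain ⟨_, hlt, _⟩ := (parent_ex H S hS q hq).choose_spec
      have h2 : dst H S hS (parent_ex H S hS q hq).choose.1 < d := by
        rw [← hd]; exact hlt
      have h1 := ih _ h2 _ rfl
      simp only [List.length_append, List.length_singleton]
      omega

lemma Wrd_prefix (q : Qr H) : ∀ u v : List G,
    Wrd H S hS q = u ++ v → Wrd H S hS (qmk H u.prod) = u := by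
  generalize hd : dst H S hS q = d
  induction d using Nat.strong_induction_on generalizing q with
  | _ d ih =>
    intro u v huv
    by_cases hq : q = qmk H 1
    · rw [hq, Wrd_one] at huv
      obtain ⟨hu, _⟩ := List.append_eq_nil_iff.mp huv.symm
      subst hu
      simpa using Wrd_one H S hS
    · rcases List.eq_nil_or_concat' v with rfl | ⟨v', b, rfl⟩
      · rw [List.append_nil] at huv
        subst huv
        rw [Wrd_prod_mk H S hS q]
      · rw [Wrd, dif_neg hq] at huv
        obtain ⟨_, hlt, _⟩ := (parent_ex H S hS q hq).choose_spec
        have h' : Wrd H S hS (parent_ex H S hS q hq).choose.1 ++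
              [(parent_ex H S hS q hq).choose.2] = (u ++ v') ++ [b] :=
          huv.trans (by simp)
        obtain ⟨hWp, _⟩ := List.append_inj' h' (by simp)
        have h2 : dst H S hS (parent_ex H S hS q hq).choose.1 < d := by
          rw [← hd]; exact hlt
        exact ih _ h2 _ rfl u v' hWp

end Reps

section Bound

variable (H : Subgroup G) (S : Finset G) (hS : Subgroup.closure (S : Set G) = ⊤)
include hS

lemma dst_succ {p : Qr H} {a : G} (ha : a ∈ Aset S) {k : ℕ}
    (hp : dst H S hS p ≤ k) : dst H S hS (qmul H p a) ≤ k + 1 := by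
  obtain ⟨l, hlen, hA, hq⟩ := dst_spec H S hS p
  refine dst_le H S hS ⟨l ++ [a], by simp; omega, ?_, ?_⟩
  · intro x hx
    rcases List.mem_append.mp hx with h | h
    · exact hA x h
    · rw [List.mem_singleton] at h; exact h ▸ ha
  · rw [List.prod_append, List.prod_singleton, ← qmul_mk, hq]

lemma dst_bound [H.FiniteIndex] (q : Qr H) : dst H S hS q ≤ Nat.card (Qr H) := by
  have hfin : Finite (Qr H) :=
    Finite.of_equiv _ (QuotientGroup.quotientRightRelEquivQuotientLeftRel H).symm
  cases nonempty_fintype (Qr H)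
  set n := Nat.card (Qr H) with hn
  let D : ℕ → Finset (Qr H) := fun k => Finset.univ.filter (fun r => dst H S hS r ≤ k)
  have hmemD : ∀ (k : ℕ) (r : Qr H), r ∈ D k ↔ dst H S hS r ≤ k := by
    intro k r; simp [D]
  have hmono : ∀ k, D k ⊆ D (k + 1) := fun k r hr =>
    (hmemD _ _).mpr (le_trans ((hmemD _ _).mp hr) (Nat.le_succ k))
  have hstep : ∀ k, D k = D (k + 1) → D (k + 1) = D (k + 2) := by
    intro k he
    apply Finset.Subset.antisymm (hmono _)
    intro r hr12
    have hr2 : dst H S hS r ≤ k + 2 := (hmemD _ _).mp hr12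
    by_cases h1 : r = qmk H 1
    · exact (hmemD _ _).mpr (by rw [h1, dst_one]; omega)
    · obtain ⟨pa, hA, hlt, hq'⟩ := parent_ex H S hS r h1
      have hp2 : dst H S hS pa.1 ≤ k + 1 := by omega
      have hp1 : pa.1 ∈ D (k + 1) := (hmemD _ _).mpr hp2
      rw [← he] at hp1
      have h3 := dst_succ H S hS hA ((hmemD _ _).mp hp1)
      rw [hq'] at h3
      exact (hmemD _ _).mpr (by omega)
  have hstab : ∀ k, D k = D (k + 1) → ∀ m, D (k + m) = D k := by
    intro k he
    have hsucc : ∀ m, D (k + m) = D (k + m + 1) := by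
      intro m; induction m with
      | zero => exact he
      | succ m ih => exact hstep (k + m) ih
    intro m; induction m with
    | zero => rfl
    | succ m ih => rw [← ih]; exact (hsucc m).symm
  have huniv : ∀ k, D k = D (k + 1) → ∀ r, r ∈ D k := by
    intro k he r
    have h1 : r ∈ D (k + dst H S hS r) := (hmemD _ _).mpr (by omega)
    rwa [hstab k he] at h1
  have hcard : ∀ k, (∀ r, r ∈ D k) ∨ k + 1 ≤ (D k).card := by
    intro k; induction k with
    | zero =>
        right
        have : qmk H 1 ∈ D 0 := (hmemD _ _).mpr (by rw [dst_one])
        have := Finset.card_pos.mpr ⟨_, this⟩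
        omega
    | succ k ih =>
        rcases ih with h | h
        · exact Or.inl fun r => hmono k (h r)
        · by_cases he : D k = D (k + 1)
          · exact Or.inl fun r => he ▸ huniv k he r
          · right
            have hss : D k ⊂ D (k + 1) := ⟨hmono k, fun hsub =>
              he (Finset.Subset.antisymm (hmono k) hsub)⟩
            have := Finset.card_lt_card hss
            omega
  rcases hcard n with h | h
  · exact (hmemD _ _).mp (h q)
  · exfalso
    have h2 : (D n).card ≤ Fintype.card (Qr H) := Finset.card_le_univ _
    rw [← Nat.card_eq_fintype_card] at h2
    omega

noncomputable def rep (g : G) : G := (Wrd H S hS (qmk H g)).prod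

lemma rep_eq_of_qmk {x y : G} (h : qmk H x = qmk H y) :
    rep H S hS x = rep H S hS y := by unfold rep; rw [h]

lemma qmk_rep (g : G) : qmk H (rep H S hS g) = qmk H g :=
  Wrd_prod_mk H S hS (qmk H g)

lemma rep_of_mem {h : G} (hh : h ∈ H) : rep H S hS h = 1 := by
  have h1 : qmk H h = qmk H 1 := qmk_eq_iff.mpr (by simpa using H.inv_mem hh)
  unfold rep; rw [h1, Wrd_one]; rfl

lemma rep_Hmul {h : G} (x : G) (hh : h ∈ H) :
    rep H S hS (h * x) = rep H S hS x :=
  rep_eq_of_qmk H S hS (qmk_eq_iff.mpr (by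
    rw [show x * (h * x)⁻¹ = x * x⁻¹ * h⁻¹ by group, mul_inv_cancel, one_mul]
    exact H.inv_mem hh))

lemma mem_of_qmk_one {x : G} (h : qmk H x = qmk H 1) : x ∈ H := by
  have := qmk_eq_iff.mp h.symm
  simpa using this

lemma qmk_one_of_mem {x : G} (h : x ∈ H) : qmk H x = qmk H 1 :=
  qmk_eq_iff.mpr (by simpa using H.inv_mem h)

/-- The Schreier elements associated with the representative function. -/
def Yset : Set G :=
  {x | ∃ c a : G, a ∈ Aset S ∧ x = rep H S hS c * a * (rep H S hS (c * a))⁻¹}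

lemma Yset_sub {x : G} (hx : x ∈ Yset H S hS) : x ∈ H := by
  obtain ⟨c, a, _, rfl⟩ := hx
  have h1 : c * (rep H S hS c)⁻¹ ∈ H := qmk_eq_iff.mp (qmk_rep H S hS c)
  have h2 : (c * a) * (rep H S hS (c * a))⁻¹ ∈ H := qmk_eq_iff.mp (qmk_rep H S hS (c * a))
  have h3 : rep H S hS c * a * (rep H S hS (c * a))⁻¹ =
      (c * (rep H S hS c)⁻¹)⁻¹ * ((c * a) * (rep H S hS (c * a))⁻¹) := by group
  rw [h3]
  exact H.mul_mem (H.inv_mem h1) h2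

lemma Yset_finite [H.FiniteIndex] : (Yset H S hS).Finite := by
  have hfin : Finite (Qr H) :=
    Finite.of_equiv _ (QuotientGroup.quotientRightRelEquivQuotientLeftRel H).symm
  have hsub : Yset H S hS ⊆
      (fun p : Qr H × G => rep H S hS p.1.out * p.2 * (rep H S hS (p.1.out * p.2))⁻¹) ''
        (Set.univ ×ˢ Aset S) := by
    rintro x ⟨c, a, ha, rfl⟩
    refine ⟨(qmk H c, a), ⟨Set.mem_univ _, ha⟩, ?_⟩
    have h1 : qmk H (qmk H c).out = qmk H c := (qmk H c).out_eq
    have h2 : rep H S hS (qmk H c).out = rep H S hS c := rep_eq_of_qmk H S hS h1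
    have h3 : qmk H ((qmk H c).out * a) = qmk H (c * a) := by
      rw [qmk_eq_iff]
      rw [show c * a * ((qmk H c).out * a)⁻¹ = c * ((qmk H c).out)⁻¹ * ((qmk H c).out * a * a⁻¹ * ((qmk H c).out)⁻¹)⁻¹ by group]
      have := qmk_eq_iff.mp h1
      rw [show c * ((qmk H c).out)⁻¹ * ((qmk H c).out * a * a⁻¹ * ((qmk H c).out)⁻¹)⁻¹ = c * ((qmk H c).out)⁻¹ by group]
      exact this
    have h4 : rep H S hS ((qmk H c).out * a) = rep H S hS (c * a) := rep_eq_of_qmk H S hS h3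
    simp only [h2, h4]
  exact Set.Finite.subset (Set.Finite.image _
    ((Set.finite_univ).prod (Aset_finite S))) hsub

lemma tau_letters_Yset {u : List G} (hu : ∀ x ∈ u, x ∈ Aset S) {c : G}
    {x : G} (hx : x ∈ tau (rep H S hS) c u) : x ∈ Yset H S hS := by
  obtain ⟨d, a, ha, rfl⟩ := tau_mem (rep H S hS) c u hx
  exact ⟨d, a, hu a ha, rfl⟩

lemma prod_tau_of_mem {u : List G} (hu : u.prod ∈ H) :
    (tau (rep H S hS) 1 u).prod = u.prod := by
  rw [tau_prod, rep_of_mem H S hS H.one_mem]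
  simp only [one_mul]
  rw [rep_of_mem H S hS hu]
  simp

end Bound

section Main

variable (H : Subgroup G) (S : Finset G) (hS : Subgroup.closure (S : Set G) = ⊤)
include hS

lemma wrd_tau_one (q : Qr H) :
    ∀ x ∈ tau (rep H S hS) 1 (Wrd H S hS q), x = 1 := by
  apply tau_all_one
  intro p v hpv
  have hp := Wrd_prefix H S hS q p v hpv
  show rep H S hS (1 * p.prod) = 1 * p.prod
  simp only [one_mul]
  show (Wrd H S hS (qmk H p.prod)).prod = p.prod
  rw [hp]

lemma rep_hmul_all : ∀ (h x : G), h ∈ H → rep H S hS (h * x) = rep H S hS x :=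
  fun h x hh => rep_Hmul H S hS x hh

lemma block0 [H.FiniteIndex] {g : G} (hg : g ≠ 1) (hgY : g ∈ Yset H S hS) :
    ∃ u : List G, (∀ x ∈ u, x ∈ Aset S) ∧
      u.length ≤ 2 * Nat.card (Qr H) + 1 ∧ u.prod = g ∧
      del1 (tau (rep H S hS) 1 u) = [g] := by
  obtain ⟨c, a, ha, hgdef⟩ := hgY
  set W1 := Wrd H S hS (qmk H c) with hW1
  set W2 := Wrd H S hS (qmk H (c * a)) with hW2
  have hprodW1 : W1.prod = rep H S hS c := rfl
  have hprodW2 : W2.prod = rep H S hS (c * a) := rfl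
  refine ⟨W1 ++ ([a] ++ inv1 W2), ?_, ?_, ?_, ?_⟩
  · intro x hx
    rcases List.mem_append.mp hx with h | h
    · exact Wrd_letters H S hS _ x h
    · rcases List.mem_append.mp h with h | h
      · rw [List.mem_singleton] at h; exact h ▸ ha
      · have := Wrd_letters H S hS _ _ (mem_inv1 h)
        simpa using Aset_inv this
  · have l1 : W1.length ≤ Nat.card (Qr H) :=
      (Wrd_length H S hS _).trans (dst_bound H S hS _)
    have l2 : W2.length ≤ Nat.card (Qr H) :=
      (Wrd_length H S hS _).trans (dst_bound H S hS _)
    simp only [List.length_append, List.length_singleton, inv1_length]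
    omega
  · rw [List.prod_append, List.prod_append, List.prod_singleton, inv1_prod,
      hprodW1, hprodW2, hgdef]
    group
  · have hgH : g ∈ H := Yset_sub H S hS ⟨c, a, ha, hgdef⟩
    rw [tau_append, one_mul, hprodW1, tau_append, List.prod_singleton]
    have e1 : tau (rep H S hS) (rep H S hS c) [a] = [g] := by
      rw [tau_cons, tau_nil]
      congr 1
      have r1 : rep H S hS (rep H S hS c) = rep H S hS c :=
        rep_eq_of_qmk H S hS (qmk_rep H S hS c)
      have r2 : rep H S hS (rep H S hS c * a) = rep H S hS (c * a) := by
        refine rep_eq_of_qmk H S hS (qmk_eq_iff.mpr ?_)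
        have h1 : c * (rep H S hS c)⁻¹ ∈ H := qmk_eq_iff.mp (qmk_rep H S hS c)
        rwa [show c * a * (rep H S hS c * a)⁻¹ = c * (rep H S hS c)⁻¹ by group]
      rw [r1, r2, hgdef]
    rw [e1]
    have e2 : tau (rep H S hS) (rep H S hS c * a) (inv1 W2) =
        inv1 (tau (rep H S hS) 1 W2) := by
      rw [tau_inv1, hprodW2]
      congr 1
      refine tau_congr (rep H S hS) (rep_hmul_all H S hS) ?_ W2
      rw [inv_one, mul_one, ← hgdef]
      exact hgH
    rw [e2, del1_append, del1_append]
    have e3 : del1 (inv1 (tau (rep H S hS) 1 W2)) = [] := by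
      refine del1_eq_nil fun x hx => ?_
      have hx' := mem_inv1 hx
      have h5 := wrd_tau_one H S hS (qmk H (c * a)) _ hx'
      rw [show x = (x⁻¹)⁻¹ by simp, h5, inv_one]
    rw [e3, del1_eq_nil (wrd_tau_one H S hS (qmk H c)), del1_cons, if_neg hg]
    simp

lemma block_exists [H.FiniteIndex] {g : G} (hg : g ≠ 1)
    (hgY : g ∈ Yset H S hS ∨ g⁻¹ ∈ Yset H S hS) :
    ∃ u : List G, (∀ x ∈ u, x ∈ Aset S) ∧
      u.length ≤ 2 * Nat.card (Qr H) + 1 ∧ u.prod = g ∧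
      del1 (tau (rep H S hS) 1 u) = [g] := by
  rcases hgY with hgY | hgY
  · exact block0 H S hS hg hgY
  · have hginv : g⁻¹ ≠ 1 := fun h => hg (by simpa using congrArg Inv.inv h)
    obtain ⟨u0, h1, h2, h3, h4⟩ := block0 H S hS hginv hgY
    have hgH : g ∈ H := by
      have := Yset_sub H S hS hgY
      simpa using H.inv_mem this
    refine ⟨inv1 u0, ?_, by simpa using h2, by rw [inv1_prod, h3]; simp, ?_⟩
    · intro x hx
      have := h1 _ (mem_inv1 hx)
      simpa using Aset_inv this
    · rw [tau_inv1, h3]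
      have e1 : tau (rep H S hS) (1 * (g⁻¹)⁻¹) u0 = tau (rep H S hS) 1 u0 := by
        refine tau_congr (rep H S hS) (rep_hmul_all H S hS) ?_ u0
        rw [one_mul, inv_inv, inv_one, mul_one]
        exact hgH
      rw [e1, del1_inv1, h4]
      simp [inv1]

lemma assemble [H.FiniteIndex] (w : List G)
    (hw : ∀ g ∈ w, g ≠ 1 ∧ (g ∈ Yset H S hS ∨ g⁻¹ ∈ Yset H S hS)) :
    ∃ Wl : List G, (∀ x ∈ Wl, x ∈ Aset S) ∧
      Wl.length ≤ (2 * Nat.card (Qr H) + 1) * w.length ∧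
      Wl.prod = w.prod ∧ del1 (tau (rep H S hS) 1 Wl) = w := by
  induction w with
  | nil => exact ⟨[], by simp, by simp, by simp, by simp⟩
  | cons g w ih =>
      obtain ⟨Wl, h1, h2, h3, h4⟩ := ih fun z hz => hw z (List.mem_cons_of_mem _ hz)
      obtain ⟨hgne, hgY⟩ := hw g (List.mem_cons_self)
      obtain ⟨u, hu1, hu2, hu3, hu4⟩ := block_exists H S hS hgne hgY
      have hgH : g ∈ H := by
        rcases hgY with h | h
        · exact Yset_sub H S hS h
        · simpa using H.inv_mem (Yset_sub H S hS h)
      refine ⟨u ++ Wl, ?_, ?_, ?_, ?_⟩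
      · intro x hx
        rcases List.mem_append.mp hx with h | h
        · exact hu1 x h
        · exact h1 x h
      · calc (u ++ Wl).length = u.length + Wl.length := by simp
          _ ≤ (2 * Nat.card (Qr H) + 1) + (2 * Nat.card (Qr H) + 1) * w.length :=
              Nat.add_le_add hu2 h2
          _ = (2 * Nat.card (Qr H) + 1) * (g :: w).length := by
              rw [List.length_cons]; ring
      · rw [List.prod_append, hu3, h3, List.prod_cons]
      · rw [tau_append, one_mul, hu3, del1_append, hu4]
        have e1 : tau (rep H S hS) g Wl = tau (rep H S hS) 1 Wl := by
          refine tau_congr (rep H S hS) (rep_hmul_all H S hS) ?_ Wl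
          rw [inv_one, mul_one]; exact hgH
        rw [e1, h4]
        rfl

end Main

lemma relator_exists {G' : Type*} [Group G'] {Sset : Set G'} {N : ℕ}
    (h : girthWith Sset ≤ (N : ℕ∞)) :
    ∃ w : List G', IsRelatorWord Sset w ∧ w.length ≤ N := by
  by_contra hc
  push_neg at hc
  have h2 : ((N + 1 : ℕ) : ℕ∞) ≤ girthWith Sset := by
    rw [girthWith]
    refine le_iInf₂ fun w hw => ?_
    have h3 : N < w.length := hc w hw
    exact_mod_cast h3
  have h4 : ((N + 1 : ℕ) : ℕ∞) ≤ (N : ℕ∞) := h2.trans h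
  have h5 : N + 1 ≤ N := by exact_mod_cast h4
  omega

section Gen

variable (H : Subgroup G) (S : Finset G) (hS : Subgroup.closure (S : Set G) = ⊤)
include hS

noncomputable def Tfin [H.FiniteIndex] : Finset ↥H :=
  Set.Finite.toFinset (Set.Finite.preimage
    (Set.injOn_of_injective Subtype.val_injective)
    ((Yset_finite H S hS).diff (t := {1})))

lemma mem_Tfin [H.FiniteIndex] {t : ↥H} :
    t ∈ Tfin H S hS ↔ (t : G) ∈ Yset H S hS ∧ (t : G) ≠ 1 := by
  rw [Tfin, Set.Finite.mem_toFinset, Set.mem_preimage, Set.mem_diff,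
    Set.mem_singleton_iff]

lemma Tfin_closure [H.FiniteIndex] :
    Subgroup.closure ((Tfin H S hS : Finset ↥H) : Set ↥H) = ⊤ := by
  rw [eq_top_iff]
  rintro x -
  obtain ⟨u, hu, hup⟩ := exists_word S hS (x : G)
  have hxH : u.prod ∈ H := hup ▸ x.2
  have hprod : (del1 (tau (rep H S hS) 1 u)).prod = (x : G) := by
    rw [del1_prod, prod_tau_of_mem H S hS hxH, hup]
  have hlet : ∀ z ∈ del1 (tau (rep H S hS) 1 u), z ∈ Yset H S hS ∧ z ≠ 1 := by
    intro z hz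
    obtain ⟨hz1, hz2⟩ := mem_del1 hz
    exact ⟨tau_letters_Yset H S hS hu hz1, hz2⟩
  have key : ∀ v : List G, (∀ z ∈ v, z ∈ Yset H S hS ∧ z ≠ 1) →
      ∃ t : ↥H, (↑t : G) = v.prod ∧
        t ∈ Subgroup.closure ((Tfin H S hS : Finset ↥H) : Set ↥H) := by
    intro v hv
    induction v with
    | nil => exact ⟨1, by simp, Subgroup.one_mem _⟩
    | cons z v ih =>
        obtain ⟨t, ht, htc⟩ := ih fun y hy => hv y (List.mem_cons_of_mem _ hy)
        obtain ⟨hz1, hz2⟩ := hv z (List.mem_cons_self)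
        refine ⟨⟨z, Yset_sub H S hS hz1⟩ * t, by simp [ht], Subgroup.mul_mem _ ?_ htc⟩
        apply Subgroup.subset_closure
        rw [Finset.mem_coe, mem_Tfin H S hS]
        exact ⟨hz1, hz2⟩
  obtain ⟨t, ht, htc⟩ := key _ hlet
  have : t = x := Subtype.ext (by rw [ht, hprod])
  rwa [this] at htc

lemma girth_bound [H.FiniteIndex] {N : ℕ} (hN : groupGirth ↥H ≤ (N : ℕ∞)) :
    girthWith (S : Set G) ≤ (((2 * Nat.card (Qr H) + 1) * N : ℕ) : ℕ∞) := by
  have hg1 : girthWith ((Tfin H S hS : Finset ↥H) : Set ↥H) ≤ groupGirth ↥H := by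
    rw [groupGirth]
    exact le_iSup₂ (f := fun (T : Finset ↥H) (_ : T ∈ {T : Finset ↥H |
      Subgroup.closure (T : Set ↥H) = ⊤}) => girthWith (T : Set ↥H))
      (Tfin H S hS) (Tfin_closure H S hS)
  obtain ⟨wh, hrel, hlen⟩ := relator_exists (hg1.trans hN)
  obtain ⟨hne, hletters, hchain, hprod1⟩ := hrel
  set w : List G := wh.map (fun x : ↥H => (x : G)) with hw
  have hwlet : ∀ g ∈ w, g ≠ 1 ∧ (g ∈ Yset H S hS ∨ g⁻¹ ∈ Yset H S hS) := by
    intro g hg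
    rw [hw, List.mem_map] at hg
    obtain ⟨g0, hg0, rfl⟩ := hg
    rcases hletters g0 hg0 with h | h
    · have h2 := (mem_Tfin H S hS).mp (Finset.mem_coe.mp h)
      exact ⟨h2.2, Or.inl h2.1⟩
    · have h2 := (mem_Tfin H S hS).mp (Finset.mem_coe.mp h)
      have h3 : ((g0⁻¹ : ↥H) : G) = (g0 : G)⁻¹ := rfl
      rw [h3] at h2
      refine ⟨?_, Or.inr h2.1⟩
      intro hone
      exact h2.2 (by rw [hone]; simp)
  obtain ⟨Wl, hW1, hW2, hW3, hW4⟩ := assemble H S hS w hwlet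
  have hWprod : Wl.prod = 1 := by
    rw [hW3, hw]
    have := map_list_prod (H.subtype) wh
    simp only [Subgroup.coe_subtype] at this
    rw [← this, hprod1]
    simp
  obtain ⟨V, hV, hVc⟩ := exists_reduct Wl
  by_cases hVnil : V = []
  · exfalso
    rw [hVnil] at hV
    have h1 : RedTo (tau (rep H S hS) 1 Wl) (tau (rep H S hS) 1 []) :=
      tau_redto (rep H S hS) 1 hV
    have h2 := del1_redto h1
    rw [hW4] at h2
    simp only [tau_nil] at h2
    have h2' : RedTo w [] := by simpa [del1] using h2
    have hwchain : w.Chain' (fun a b => b ≠ a⁻¹) := by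
      rw [hw]; simp only [List.Chain', List.isChain_map]
      refine hchain.imp ?_
      intro a b hab
      intro hcon
      apply hab
      apply Subtype.ext
      rw [hcon]
      rfl
    have := eq_nil_of_reduced_redto_nil hwchain h2'
    rw [hw] at this
    exact hne (List.map_eq_nil_iff.mp this)
  · have hrel : IsRelatorWord (S : Set G) V := by
      refine ⟨hVnil, ?_, hVc, ?_⟩
      · intro g hg
        have hgW := hV.mem hg
        have h := hW1 g hgW
        rcases h with h | h
        · exact Or.inl h
        · exact Or.inr h
      · rw [← hV.prod_eq, hWprod]
    have hlen1 : V.length ≤ Wl.length := hV.length_le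
    have hwhN : wh.length ≤ N := by exact_mod_cast hlen
    have hwN : w.length ≤ N := by rw [hw]; simpa using hwhN
    have hVN : V.length ≤ (2 * Nat.card (Qr H) + 1) * N :=
      le_trans hlen1 (le_trans hW2 (Nat.mul_le_mul_left _ hwN))
    calc girthWith (S : Set G) ≤ ((V.length : ℕ) : ℕ∞) := by
          rw [girthWith]
          exact iInf₂_le V hrel
      _ ≤ (((2 * Nat.card (Qr H) + 1) * N : ℕ) : ℕ∞) := by exact_mod_cast hVN

end Gen

end GirthAux

/-- A finitely generated group containing a finitely generated finite-index subgroup with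
finite girth has finite girth. -/
theorem finite_girth_of_finite_index_subgroup {G : Type*} [Group G] [Group.FG G]
    (H : Subgroup G) [H.FiniteIndex] [Group.FG H]
    (hH : groupGirth H < ⊤) :
    groupGirth G < ⊤ := by
  obtain ⟨N, hN'⟩ := WithTop.ne_top_iff_exists.mp (lt_top_iff_ne_top.mp hH)
  have hN : groupGirth ↥H ≤ (N : ℕ∞) := le_of_eq hN'.symm
  set C : ℕ := (2 * Nat.card (GirthAux.Qr H) + 1) * N with hC
  have hb : groupGirth G ≤ (C : ℕ∞) := by
    rw [groupGirth]
    refine iSup₂_le fun S hS => ?_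
    exact GirthAux.girth_bound H S hS hN
  exact lt_of_le_of_lt hb (WithTop.coe_lt_top C)
end

section
/- If a finitely generated group G admits a surjective group homomorphism with finite kernel onto a finitely generated group Q with finite girth, then G has finite girth. -/
open Pointwise

lemma girthWith_le_length {G : Type*} [Group G] {S : Set G} {w : List G}
    (h : IsRelatorWord S w) : girthWith S ≤ w.length :=
  iInf₂_le w h

lemma exists_relator_of_girthWith_le {G : Type*} [Group G] {S : Set G} {N : ℕ}
    (h : girthWith S ≤ N) : ∃ w, IsRelatorWord S w ∧ w.length ≤ N := by
  by_contra hc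
  push_neg at hc
  have h2 : ((N + 1 : ℕ) : ℕ∞) ≤ girthWith S := by
    apply le_iInf₂
    intro w hw
    have := hc w hw
    exact_mod_cast this
  have h3 : ((N + 1 : ℕ) : ℕ∞) ≤ (N : ℕ∞) := h2.trans h
  have : N + 1 ≤ N := by exact_mod_cast h3
  omega

lemma chain'_imp_mem {α : Type*} {R S : α → α → Prop} {l : List α}
    (h : ∀ a ∈ l, ∀ b ∈ l, R a b → S a b) (hc : List.Chain' R l) : List.Chain' S l := by
  induction l with
  | nil => exact List.isChain_nil
  | cons a t ih =>
    cases t with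
    | nil => exact List.isChain_singleton a
    | cons b t' =>
      unfold List.Chain' at hc ⊢
      rw [List.isChain_cons_cons] at hc ⊢
      refine ⟨h a (by simp) b (by simp) hc.1, ih ?_ hc.2⟩
      intro x hx y hy
      exact h x (by simp [hx]) y (by simp [hy])

/-- Any relator word over a set not containing `1` can be shortened to a cyclically
reduced one. -/
lemma exists_cyclically_reduced {Q : Type*} [Group Q] {T : Set Q} (h1 : (1 : Q) ∉ T)
    {v : List Q} (hv : IsRelatorWord T v) :
    ∃ u : List Q, IsRelatorWord T u ∧ u.length ≤ v.length ∧
      ∀ (hu : u ≠ []), u.head hu ≠ (u.getLast hu)⁻¹ := by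
  suffices H : ∀ n (v : List Q), v.length ≤ n → IsRelatorWord T v →
      ∃ u : List Q, IsRelatorWord T u ∧ u.length ≤ v.length ∧
        ∀ (hu : u ≠ []), u.head hu ≠ (u.getLast hu)⁻¹ by
    exact H v.length v le_rfl hv
  intro n
  induction n with
  | zero =>
    intro v hl hv
    exact absurd (List.length_eq_zero_iff.mp (Nat.le_zero.mp hl)) hv.1
  | succ n ih =>
    intro v hl hv
    obtain ⟨hne, hmem, hchain, hprod⟩ := hv
    have hne1 : ∀ g ∈ v, g ≠ 1 := by
      intro g hg hg1
      rcases hmem g hg with h | h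
      · exact h1 (hg1 ▸ h)
      · rw [hg1, inv_one] at h; exact h1 h
    by_cases hcyc : v.head hne ≠ (v.getLast hne)⁻¹
    · exact ⟨v, ⟨hne, hmem, hchain, hprod⟩, le_rfl, fun _ => hcyc⟩
    push_neg at hcyc
    rcases v with _ | ⟨a, l⟩
    · exact absurd rfl hne
    rcases l with _ | ⟨b, t⟩
    · exact absurd (by simpa using hprod) (hne1 a (by simp))
    set l : List Q := b :: t with hldef
    have hlne : l ≠ [] := by simp [hldef]
    set c := l.getLast hlne with hc
    have hgl : (a :: l).getLast (by simp) = c := by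
      rw [hc]; exact List.getLast_cons hlne
    have hca : c = a⁻¹ := by
      have : a = c⁻¹ := by simpa [hgl] using hcyc
      rw [this, inv_inv]
    set u := l.dropLast with hu
    have hlu : l = u ++ [c] := by
      rw [hu, hc]; exact (List.dropLast_append_getLast hlne).symm
    have hchl : List.Chain' (fun x y => y ≠ x⁻¹) l := hchain.tail
    have hchu : List.Chain' (fun x y => y ≠ x⁻¹) u := by
      unfold List.Chain' at hchl ⊢
      rw [hlu, List.isChain_append] at hchl
      exact hchl.1
    have hune : u ≠ [] := by
      intro h0
      rw [h0] at hlu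
      simp only [List.nil_append] at hlu
      have : List.Chain' (fun x y => y ≠ x⁻¹) (a :: [c]) := by rw [← hlu]; exact hchain
      unfold List.Chain' at this
      rw [List.isChain_cons_cons] at this
      exact this.1 hca
    have humem : ∀ g ∈ u, g ∈ T ∨ g⁻¹ ∈ T := by
      intro g hg
      apply hmem
      have : g ∈ l := by rw [hlu]; exact List.mem_append_left _ hg
      exact List.mem_cons_of_mem _ this
    have huprod : u.prod = 1 := by
      have hp : a * (u.prod * c) = 1 := by
        have : (a :: l).prod = 1 := hprod
        rw [hlu] at this
        simpa [List.prod_cons, List.prod_append] using this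
      rw [hca] at hp
      have h2 : u.prod * a⁻¹ = a⁻¹ := by
        have := congrArg (fun x => a⁻¹ * x) hp
        simpa [mul_assoc] using this
      have := congrArg (fun x => x * a) h2
      simpa using this
    have hvlen : (a :: l).length = u.length + 2 := by
      rw [hlu]; simp
    have hllen : (a :: l).length ≤ n + 1 := hl
    have hulen : u.length ≤ n := by omega
    obtain ⟨u', hu', hu'len, hu'cyc⟩ := ih u hulen ⟨hune, humem, hchu, huprod⟩
    exact ⟨u', hu', by omega, hu'cyc⟩

lemma chain'_flatten_replicate {α : Type*} {R : α → α → Prop} {w : List α} (hw : w ≠ [])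
    (hc : List.Chain' R w)
    (hj : R (w.getLast hw) (w.head hw)) (m : ℕ) :
    List.Chain' R (List.replicate m w).flatten := by
  induction m with
  | zero => simp [List.Chain', List.isChain_nil]
  | succ m ih =>
    unfold List.Chain'
    rw [List.replicate_succ, List.flatten_cons, List.isChain_append]
    refine ⟨hc, ih, ?_⟩
    intro x hx y hy
    have hx' : x = w.getLast hw := by
      rw [List.getLast?_eq_getLast hw] at hx
      exact (Option.mem_some_iff.mp hx).symm
    have hy' : y = w.head hw := by
      cases m with
      | zero => simp at hy
      | succ m =>
        rw [List.replicate_succ, List.flatten_cons] at hy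
        rw [List.head?_append_of_ne_nil _ hw, List.head?_eq_head hw] at hy
        exact (Option.mem_some_iff.mp hy).symm
    rw [hx', hy']
    exact hj

/-- A finitely generated group admitting a finite-kernel surjection onto a finitely
generated group with finite girth has finite girth. -/
theorem finite_girth_of_finite_kernel_surjection {G Q : Type*} [Group G] [Group.FG G]
    [Group Q] [Group.FG Q] (f : G →* Q) (hsurj : Function.Surjective f)
    (hker : Finite f.ker) (hQ : groupGirth Q < ⊤) :
    groupGirth G < ⊤ := by
  classical
  obtain ⟨N, hN⟩ : ∃ N : ℕ, groupGirth Q = N := by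
    have hne := hQ.ne
    cases h : groupGirth Q with
    | top => exact absurd h hne
    | coe N => exact ⟨N, rfl⟩
  have hKpos : 0 < Nat.card f.ker := Nat.card_pos
  set C : ℕ := Nat.card f.ker * N with hC
  have key : ∀ S : Finset G, Subgroup.closure (S : Set G) = ⊤ →
      girthWith (S : Set G) ≤ (C : ℕ∞) := by
    intro S hS
    set T : Finset Q := (S.image f).erase 1 with hT
    have hTsub : ∀ q ∈ T, ∃ s ∈ S, f s = q := by
      intro q hq
      have : q ∈ S.image f := Finset.mem_of_mem_erase hq
      simpa using this
    have hTgen : Subgroup.closure (T : Set Q) = ⊤ := by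
      have himg : Subgroup.closure ((S.image f : Finset Q) : Set Q) = ⊤ := by
        have h1 : ((S.image f : Finset Q) : Set Q) = f '' (S : Set G) := by
          simp [Finset.coe_image]
        rw [h1, ← MonoidHom.map_closure, hS, ← MonoidHom.range_eq_map]
        exact f.range_eq_top_of_surjective hsurj
      rw [eq_top_iff, ← himg]
      apply (Subgroup.closure_le _).mpr
      intro x hx
      by_cases hx1 : x = 1
      · simp [hx1, Subgroup.one_mem]
      · apply Subgroup.subset_closure
        simp only [hT, Finset.coe_erase, Set.mem_diff, Set.mem_singleton_iff]
        exact ⟨hx, hx1⟩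
    have h1T : (1 : Q) ∉ (T : Set Q) := by simp [hT]
    have hg : girthWith (T : Set Q) ≤ (N : ℕ∞) := by
      have : girthWith (T : Set Q) ≤ groupGirth Q :=
        le_iSup₂ (f := fun (S : Finset Q) (_ : S ∈ {S : Finset Q |
          Subgroup.closure (S : Set Q) = ⊤}) => girthWith (S : Set Q)) T hTgen
      rw [hN] at this
      exact this
    obtain ⟨v, hv, hvlen⟩ := exists_relator_of_girthWith_le hg
    obtain ⟨u, hu, hulen, hucyc⟩ := exists_cyclically_reduced h1T hv
    obtain ⟨hune, humem, huchain, huprod⟩ := hu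
    -- lift letters of u to G
    set lam : Q → G := fun q =>
      if h : ∃ s ∈ (S : Set G), f s = q then h.choose
      else if h2 : ∃ s ∈ (S : Set G), f s = q⁻¹ then (h2.choose)⁻¹ else 1
      with hlamdef
    have hlam : ∀ q : Q, (q ∈ (T : Set Q) ∨ q⁻¹ ∈ (T : Set Q)) →
        (lam q ∈ (S : Set G) ∨ (lam q)⁻¹ ∈ (S : Set G)) ∧ f (lam q) = q := by
      intro q hq
      by_cases h : ∃ s ∈ (S : Set G), f s = q
      · simp only [hlamdef, dif_pos h]
        exact ⟨Or.inl h.choose_spec.1, h.choose_spec.2⟩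
      · have h2 : ∃ s ∈ (S : Set G), f s = q⁻¹ := by
          rcases hq with hq | hq
          · obtain ⟨s, hs, hfs⟩ := hTsub q hq
            exact absurd ⟨s, hs, hfs⟩ h
          · obtain ⟨s, hs, hfs⟩ := hTsub q⁻¹ hq
            exact ⟨s, hs, hfs⟩
        simp only [hlamdef, dif_neg h, dif_pos h2]
        refine ⟨Or.inr (by simpa using h2.choose_spec.1), ?_⟩
        rw [map_inv, h2.choose_spec.2, inv_inv]
    set w : List G := u.map lam with hwdef
    have hwne : w ≠ [] := by simp [hwdef, hune]
    have hwlen : w.length = u.length := by simp [hwdef]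
    have hwmem : ∀ g ∈ w, g ∈ (S : Set G) ∨ g⁻¹ ∈ (S : Set G) := by
      intro g hg
      rw [hwdef, List.mem_map] at hg
      obtain ⟨q, hq, rfl⟩ := hg
      exact (hlam q (humem q hq)).1
    have hwf : ∀ q ∈ u, f (lam q) = q := fun q hq => (hlam q (humem q hq)).2
    have hwchain : List.Chain' (fun a b => b ≠ a⁻¹) w := by
      unfold List.Chain'
      rw [hwdef, List.isChain_map]
      apply chain'_imp_mem (R := fun a b => b ≠ a⁻¹) ?_ huchain
      intro a ha b hb hab heq
      apply hab
      have : f (lam b) = f ((lam a)⁻¹) := by rw [heq]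
      rw [hwf b hb, map_inv, hwf a ha] at this
      exact this
    have hwhead : w.head hwne = lam (u.head hune) :=
      List.head_map hwne
    have hwlast : w.getLast hwne = lam (u.getLast hune) :=
      List.getLast_map hwne
    have hwj : w.head hwne ≠ (w.getLast hwne)⁻¹ := by
      rw [hwhead, hwlast]
      intro heq
      apply hucyc hune
      have : f (lam (u.head hune)) = f ((lam (u.getLast hune))⁻¹) := by rw [heq]
      rw [hwf _ (List.head_mem hune), map_inv, hwf _ (List.getLast_mem hune)] at this
      exact this
    -- the product of w is in the kernel
    have hfw : f w.prod = 1 := by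
      have hmap : w.map f = u := by
        rw [hwdef, List.map_map]
        have : ∀ q ∈ u, (f ∘ lam) q = id q := fun q hq => hwf q hq
        rw [List.map_congr_left this, List.map_id]
      rw [map_list_prod, hmap, huprod]
    set κ : f.ker := ⟨w.prod, MonoidHom.mem_ker.mpr hfw⟩ with hκ
    set m : ℕ := orderOf κ with hm
    have hmpos : 0 < m := orderOf_pos κ
    have hmle : m ≤ Nat.card f.ker :=
      Nat.le_of_dvd hKpos (orderOf_dvd_natCard κ)
    have hwpow : w.prod ^ m = 1 := by
      have h1 : κ ^ m = 1 := pow_orderOf_eq_one κ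
      have := congrArg (Subtype.val : f.ker → G) h1
      simpa [hκ] using this
    -- the final relator word in G
    set W : List G := (List.replicate m w).flatten with hW
    have hWlen : W.length = m * w.length := by
      simp [hW, List.length_flatten, List.map_replicate, List.sum_replicate, smul_eq_mul]
    have hWrel : IsRelatorWord (S : Set G) W := by
      refine ⟨?_, ?_, ?_, ?_⟩
      · apply List.ne_nil_of_length_pos
        rw [hWlen]
        have : 0 < w.length := List.length_pos_iff.mpr hwne
        positivity
      · intro g hg
        rw [hW, List.mem_flatten] at hg
        obtain ⟨l, hl, hgl⟩ := hg
        rw [List.eq_of_mem_replicate hl] at hgl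
        exact hwmem g hgl
      · exact chain'_flatten_replicate hwne hwchain (fun heq => hwj (by rw [heq])) m
      · rw [hW, List.prod_flatten, List.map_replicate, List.prod_replicate, hwpow]
    have hWbound : W.length ≤ C := by
      rw [hWlen, hC]
      have h1 : w.length ≤ N := by rw [hwlen]; exact hulen.trans hvlen
      exact Nat.mul_le_mul hmle h1
    calc girthWith (S : Set G) ≤ (W.length : ℕ∞) := girthWith_le_length hWrel
      _ ≤ (C : ℕ∞) := by exact_mod_cast hWbound
  have hle : groupGirth G ≤ (C : ℕ∞) := by
    apply iSup₂_le
    intro S hS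
    exact key S hS
  exact lt_of_le_of_lt hle (by exact_mod_cast WithTop.coe_lt_top C)
end

section
/- North–south dynamics criterion for infinite girth: Let G be a group acting on a set X, generated by a finite set {γ₁, …, γₙ}. Suppose there exist σ, τ ∈ G and subsets U_σ, U_τ ⊆ X such that: (1) σ^k(X \ U_σ) ⊆ U_σ and τ^k(X \ U_τ) ⊆ U_τ for every nonzero integer k; (2) U_σ ∩ U_τ = ∅; (3) γⱼ^ε(U_τ) ∩ U_σ = ∅ and γⱼ^ε(U_σ) ∩ U_τ = ∅ for every 1 ≤ j ≤ n and ε = ±1; and (4) the set X \ ((U_σ ∪ U_τ) ∪ ⋃_{ε=±1} ⋃_{j=1}^{n} γⱼ^ε(U_σ ∪ U_τ)) is nonempty. Then G is not a cyclic group and G has infinite girth. -/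
open Pointwise

section NS

variable {G X : Type*} [Group G] [MulAction G X]

/-- The ping-pong state invariant used in the north–south dynamics argument. -/
def NSInv (σ τ : G) (Uσ Uτ : Set X) (p : X) {n : ℕ} (gg : Fin n → G) (a : Fin n → ℤ)
    (u : List G) : Prop :=
  ∃ q : X,
    (∃ ε r : ℤ, (ε = 1 ∨ ε = -1) ∧ 1 ≤ r ∧ r ≤ u.length ∧
        u.prod • p = σ ^ (ε * r) • q ∧ q ∉ Uσ ∧ u.head? = some (σ ^ ε)) ∨
    (∃ (j : Fin n) (δ r : ℤ), (δ = 1 ∨ δ = -1) ∧ 0 ≤ r ∧ r + 1 ≤ u.length ∧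
        u.prod • p = σ ^ (a j + δ * r) • q ∧ q ∉ Uσ ∧
        (if r = 0 then u.head? = some (gg j) else u.head? = some (σ ^ δ))) ∨
    (∃ ε r : ℤ, (ε = 1 ∨ ε = -1) ∧ 1 ≤ r ∧ r ≤ u.length ∧
        u.prod • p = τ ^ (ε * r) • q ∧ q ∉ Uτ ∧ u.head? = some (τ ^ ε)) ∨
    (∃ (j : Fin n) (δ r : ℤ), (δ = 1 ∨ δ = -1) ∧ 0 ≤ r ∧ r + 1 ≤ u.length ∧
        u.prod • p = τ ^ (-(a j) + δ * r) • q ∧ q ∉ Uτ ∧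
        (if r = 0 then u.head? = some ((gg j)⁻¹) else u.head? = some (τ ^ δ)))

lemma ns_key {n : ℕ} (γ : Fin n → G) (σ τ : G) (Uσ Uτ : Set X) (p : X) (M : ℕ)
    (hσ : ∀ s : ℤ, s ≠ 0 → ∀ x : X, x ∉ Uσ → σ ^ s • x ∈ Uσ)
    (hτ : ∀ s : ℤ, s ≠ 0 → ∀ x : X, x ∉ Uτ → τ ^ s • x ∈ Uτ)
    (hd : ∀ x : X, x ∈ Uσ → x ∉ Uτ)
    (hA : ∀ j, ∀ x : X, x ∈ Uτ → γ j • x ∉ Uσ ∧ (γ j)⁻¹ • x ∉ Uσ)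
    (hB : ∀ j, ∀ x : X, x ∈ Uσ → γ j • x ∉ Uτ ∧ (γ j)⁻¹ • x ∉ Uτ)
    (hpσ : p ∉ Uσ) (hpτ : p ∉ Uτ)
    (a : Fin n → ℤ) (ha1 : ∀ j, 2 * (M : ℤ) ≤ a j)
    (ha2 : ∀ j k, j ≠ k → 2 * (M : ℤ) ≤ a j - a k ∨ 2 * (M : ℤ) ≤ a k - a j)
    (gg : Fin n → G) (hgg : ∀ j, gg j = σ ^ a j * γ j * τ ^ a j) :
    ∀ w : List G, w ≠ [] → (w.length : ℤ) < M →
      (∀ g ∈ w, (∃ ε : ℤ, (ε = 1 ∨ ε = -1) ∧ g = σ ^ ε) ∨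
        (∃ ε : ℤ, (ε = 1 ∨ ε = -1) ∧ g = τ ^ ε) ∨
        (∃ j, g = gg j) ∨ (∃ j, g = (gg j)⁻¹)) →
      List.Chain' (fun A B => B ≠ A⁻¹) w →
      w.prod • p ∈ Uσ ∪ Uτ := by
  -- helper rewriting lemmas
  have smul_cons : ∀ (x : G) (u : List G), (x :: u).prod • p = x • (u.prod • p) := by
    intro x u; rw [List.prod_cons, mul_smul]
  have szz : ∀ (c t : ℤ) (q : X), σ ^ c • (σ ^ t • q) = σ ^ (c + t) • q := by
    intro c t q; rw [smul_smul, ← zpow_add]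
  have tzz : ∀ (c t : ℤ) (q : X), τ ^ c • (τ ^ t • q) = τ ^ (c + t) • q := by
    intro c t q; rw [smul_smul, ← zpow_add]
  have gg_smul : ∀ (j : Fin n) (y : X), gg j • y = σ ^ a j • (γ j • (τ ^ a j • y)) := by
    intro j y; rw [hgg, mul_smul, mul_smul]
  have gg_inv_smul : ∀ (j : Fin n) (y : X),
      (gg j)⁻¹ • y = τ ^ (-(a j)) • ((γ j)⁻¹ • (σ ^ (-(a j)) • y)) := by
    intro j y; rw [hgg, mul_inv_rev, mul_inv_rev, mul_smul, mul_smul, zpow_neg, zpow_neg]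
  -- constructors for states entered with a fresh block
  have mkS1 : ∀ (ε : ℤ), (ε = 1 ∨ ε = -1) → ∀ u : List G, (u.prod • p) ∉ Uσ →
      NSInv σ τ Uσ Uτ p gg a (σ ^ ε :: u) := by
    intro ε hε u hy
    refine ⟨u.prod • p, Or.inl ⟨ε, 1, hε, le_refl _, by simp, ?_, hy, rfl⟩⟩
    rw [smul_cons, mul_one]
  have mkT1 : ∀ (ε : ℤ), (ε = 1 ∨ ε = -1) → ∀ u : List G, (u.prod • p) ∉ Uτ →
      NSInv σ τ Uσ Uτ p gg a (τ ^ ε :: u) := by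
    intro ε hε u hy
    refine ⟨u.prod • p, Or.inr (Or.inr (Or.inl ⟨ε, 1, hε, le_refl _, by simp, ?_, hy, rfl⟩))⟩
    rw [smul_cons, mul_one]
  have mkS2 : ∀ (j : Fin n) (u : List G) (t : ℤ) (q : X), u.prod • p = τ ^ t • q →
      q ∉ Uτ → a j + t ≠ 0 → NSInv σ τ Uσ Uτ p gg a (gg j :: u) := by
    intro j u t q hy hq hne
    have hy1 : τ ^ (a j + t) • q ∈ Uτ := hτ _ hne q hq
    have hy2 : γ j • (τ ^ (a j + t) • q) ∉ Uσ := (hA j _ hy1).1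
    refine ⟨γ j • (τ ^ (a j + t) • q), Or.inr (Or.inl ⟨j, 1, 0, Or.inl rfl, le_refl _,
      by simp, ?_, hy2, by simp⟩)⟩
    rw [smul_cons, gg_smul, hy, tzz]
    norm_num
  have mkT2 : ∀ (j : Fin n) (u : List G) (s : ℤ) (q : X), u.prod • p = σ ^ s • q →
      q ∉ Uσ → -(a j) + s ≠ 0 → NSInv σ τ Uσ Uτ p gg a ((gg j)⁻¹ :: u) := by
    intro j u s q hy hq hne
    have hy1 : σ ^ (-(a j) + s) • q ∈ Uσ := hσ _ hne q hq
    have hy2 : (γ j)⁻¹ • (σ ^ (-(a j) + s) • q) ∉ Uτ := (hB j _ hy1).2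
    refine ⟨(γ j)⁻¹ • (σ ^ (-(a j) + s) • q), Or.inr (Or.inr (Or.inr ⟨j, 1, 0, Or.inl rfl,
      le_refl _, by simp, ?_, hy2, by simp⟩))⟩
    rw [smul_cons, gg_inv_smul, hy, szz]
    norm_num
  intro w hnew hlenw hletw hchw
  have key : ∀ u : List G, u ≠ [] → (u.length : ℤ) < M →
      (∀ g ∈ u, (∃ ε : ℤ, (ε = 1 ∨ ε = -1) ∧ g = σ ^ ε) ∨
        (∃ ε : ℤ, (ε = 1 ∨ ε = -1) ∧ g = τ ^ ε) ∨
        (∃ j, g = gg j) ∨ (∃ j, g = (gg j)⁻¹)) →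
      List.Chain' (fun A B => B ≠ A⁻¹) u → NSInv σ τ Uσ Uτ p gg a u := by
    intro u
    induction u with
    | nil => intro h; exact absurd rfl h
    | cons x u ih =>
      intro _ hlen hlet hch
      have hx := hlet x List.mem_cons_self
      have hch2 := List.isChain_cons.mp hch
      have hhd := hch2.1
      have hlen1 : ((x :: u).length : ℤ) = (u.length : ℤ) + 1 := by
        push_cast [List.length_cons]; ring
      have hM : 1 < (M : ℤ) := by omega
      have hlenu : (u.length : ℤ) < M := by omega
      rcases eq_or_ne u [] with rfl | hu
      · -- base case: single letter
        have hp0 : (([] : List G)).prod • p = p := by simp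
        rcases hx with ⟨ε, hε, rfl⟩ | ⟨ε, hε, rfl⟩ | ⟨j, rfl⟩ | ⟨j, rfl⟩
        · exact mkS1 ε hε [] (by rw [hp0]; exact hpσ)
        · exact mkT1 ε hε [] (by rw [hp0]; exact hpτ)
        · exact mkS2 j [] 0 p (by simp) hpτ (by have := ha1 j; omega)
        · exact mkT2 j [] 0 p (by simp) hpσ (by have := ha1 j; omega)
      · have hInv := ih hu hlenu (fun g hg => hlet g (List.mem_cons_of_mem _ hg)) hch2.2
        obtain ⟨q, hcase⟩ := hInv
        rcases hx with ⟨ε, hε, rfl⟩ | ⟨ε, hε, rfl⟩ | ⟨j, rfl⟩ | ⟨j, rfl⟩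
        · -- letter σ^ε
          rcases hcase with ⟨ε', r, hε', hr1, hrlen, heq, hq, hhead⟩ |
            ⟨k, δ, r, hδ, hr0, hrlen, heq, hq, hhead⟩ |
            ⟨ε', r, hε', hr1, hrlen, heq, hq, hhead⟩ |
            ⟨k, δ, r, hδ, hr0, hrlen, heq, hq, hhead⟩
          · -- S1 + σ^ε : extend run
            have hne2 : σ ^ ε' ≠ (σ ^ ε)⁻¹ := hhd _ hhead
            have hεε : ε = ε' := by
              rcases hε with rfl | rfl <;> rcases hε' with rfl | rfl
              · rfl
              · exact absurd (by simp) hne2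
              · exact absurd (by simp) hne2
              · rfl
            subst hεε
            refine ⟨q, Or.inl ⟨ε, r + 1, hε, by omega, by omega, ?_, hq, rfl⟩⟩
            rw [smul_cons, heq, szz, show ε + ε * r = ε * (r + 1) from by ring]
          · -- S2 + σ^ε
            by_cases hr : r = 0
            · subst hr
              refine ⟨q, Or.inr (Or.inl ⟨k, ε, 1, hε, by norm_num, by omega, ?_, hq, ?_⟩)⟩
              · rw [smul_cons, heq, szz, show ε + (a k + δ * 0) = a k + ε * 1 from by ring]
              · simp
            · have hhead' : u.head? = some (σ ^ δ) := by rwa [if_neg hr] at hhead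
              have hne2 : σ ^ δ ≠ (σ ^ ε)⁻¹ := hhd _ hhead'
              have hεε : ε = δ := by
                rcases hε with rfl | rfl <;> rcases hδ with rfl | rfl
                · rfl
                · exact absurd (by simp) hne2
                · exact absurd (by simp) hne2
                · rfl
              subst hεε
              refine ⟨q, Or.inr (Or.inl ⟨k, ε, r + 1, hε, by omega, by omega, ?_, hq, ?_⟩)⟩
              · rw [smul_cons, heq, szz, show ε + (a k + ε * r) = a k + ε * (r + 1) from by ring]
              · rw [if_neg (show ¬(r + 1 = 0) by omega)]; rfl
          · -- T1 + σ^ε : fresh σ-block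
            have hy : u.prod • p ∈ Uτ := by
              rw [heq]; exact hτ _ (by rcases hε' with rfl | rfl <;> omega) q hq
            exact mkS1 ε hε u (fun h => hd _ h hy)
          · -- T2 + σ^ε
            have hy : u.prod • p ∈ Uτ := by
              rw [heq]
              refine hτ _ ?_ q hq
              have := ha1 k; rcases hδ with rfl | rfl <;> omega
            exact mkS1 ε hε u (fun h => hd _ h hy)
        · -- letter τ^ε
          rcases hcase with ⟨ε', r, hε', hr1, hrlen, heq, hq, hhead⟩ |
            ⟨k, δ, r, hδ, hr0, hrlen, heq, hq, hhead⟩ |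
            ⟨ε', r, hε', hr1, hrlen, heq, hq, hhead⟩ |
            ⟨k, δ, r, hδ, hr0, hrlen, heq, hq, hhead⟩
          · -- S1 + τ^ε : fresh τ-block
            have hy : u.prod • p ∈ Uσ := by
              rw [heq]; exact hσ _ (by rcases hε' with rfl | rfl <;> omega) q hq
            exact mkT1 ε hε u (hd _ hy)
          · -- S2 + τ^ε
            have hy : u.prod • p ∈ Uσ := by
              rw [heq]
              refine hσ _ ?_ q hq
              have := ha1 k; rcases hδ with rfl | rfl <;> omega
            exact mkT1 ε hε u (hd _ hy)
          · -- T1 + τ^ε : extend run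
            have hne2 : τ ^ ε' ≠ (τ ^ ε)⁻¹ := hhd _ hhead
            have hεε : ε = ε' := by
              rcases hε with rfl | rfl <;> rcases hε' with rfl | rfl
              · rfl
              · exact absurd (by simp) hne2
              · exact absurd (by simp) hne2
              · rfl
            subst hεε
            refine ⟨q, Or.inr (Or.inr (Or.inl ⟨ε, r + 1, hε, by omega, by omega, ?_, hq, rfl⟩))⟩
            rw [smul_cons, heq, tzz, show ε + ε * r = ε * (r + 1) from by ring]
          · -- T2 + τ^ε
            by_cases hr : r = 0
            · subst hr
              refine ⟨q, Or.inr (Or.inr (Or.inr ⟨k, ε, 1, hε, by norm_num, by omega, ?_, hq, ?_⟩))⟩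
              · rw [smul_cons, heq, tzz, show ε + (-(a k) + δ * 0) = -(a k) + ε * 1 from by ring]
              · simp
            · have hhead' : u.head? = some (τ ^ δ) := by rwa [if_neg hr] at hhead
              have hne2 : τ ^ δ ≠ (τ ^ ε)⁻¹ := hhd _ hhead'
              have hεε : ε = δ := by
                rcases hε with rfl | rfl <;> rcases hδ with rfl | rfl
                · rfl
                · exact absurd (by simp) hne2
                · exact absurd (by simp) hne2
                · rfl
              subst hεε
              refine ⟨q, Or.inr (Or.inr (Or.inr ⟨k, ε, r + 1, hε, by omega, by omega, ?_, hq, ?_⟩))⟩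
              · rw [smul_cons, heq, tzz, show ε + (-(a k) + ε * r) = -(a k) + ε * (r + 1) from by ring]
              · rw [if_neg (show ¬(r + 1 = 0) by omega)]; rfl
        · -- letter gg j
          rcases hcase with ⟨ε', r, hε', hr1, hrlen, heq, hq, hhead⟩ |
            ⟨k, δ, r, hδ, hr0, hrlen, heq, hq, hhead⟩ |
            ⟨ε', r, hε', hr1, hrlen, heq, hq, hhead⟩ |
            ⟨k, δ, r, hδ, hr0, hrlen, heq, hq, hhead⟩
          · -- from S1
            have hy : u.prod • p ∈ Uσ := by
              rw [heq]; exact hσ _ (by rcases hε' with rfl | rfl <;> omega) q hq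
            exact mkS2 j u 0 _ (by simp) (hd _ hy) (by have := ha1 j; omega)
          · -- from S2
            have hy : u.prod • p ∈ Uσ := by
              rw [heq]
              refine hσ _ ?_ q hq
              have := ha1 k; rcases hδ with rfl | rfl <;> omega
            exact mkS2 j u 0 _ (by simp) (hd _ hy) (by have := ha1 j; omega)
          · -- from T1
            refine mkS2 j u (ε' * r) q heq hq ?_
            have := ha1 j; rcases hε' with rfl | rfl <;> omega
          · -- from T2
            refine mkS2 j u (-(a k) + δ * r) q heq hq ?_
            by_cases hjk : j = k
            · subst hjk
              have hrne : r ≠ 0 := by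
                intro hr0'
                rw [if_pos hr0'] at hhead
                exact absurd rfl (hhd _ hhead)
              rcases hδ with rfl | rfl <;> omega
            · rcases ha2 j k hjk with h | h <;> rcases hδ with rfl | rfl <;> omega
        · -- letter (gg j)⁻¹
          rcases hcase with ⟨ε', r, hε', hr1, hrlen, heq, hq, hhead⟩ |
            ⟨k, δ, r, hδ, hr0, hrlen, heq, hq, hhead⟩ |
            ⟨ε', r, hε', hr1, hrlen, heq, hq, hhead⟩ |
            ⟨k, δ, r, hδ, hr0, hrlen, heq, hq, hhead⟩
          · -- from S1
            refine mkT2 j u (ε' * r) q heq hq ?_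
            have := ha1 j; rcases hε' with rfl | rfl <;> omega
          · -- from S2
            refine mkT2 j u (a k + δ * r) q heq hq ?_
            by_cases hjk : j = k
            · subst hjk
              have hrne : r ≠ 0 := by
                intro hr0'
                rw [if_pos hr0'] at hhead
                have := hhd _ hhead
                rw [inv_inv] at this
                exact absurd rfl this
              rcases hδ with rfl | rfl <;> omega
            · rcases ha2 j k hjk with h | h <;> rcases hδ with rfl | rfl <;> omega
          · -- from T1
            have hy : u.prod • p ∈ Uτ := by
              rw [heq]; exact hτ _ (by rcases hε' with rfl | rfl <;> omega) q hq
            exact mkT2 j u 0 _ (by simp) (fun h => hd _ h hy) (by have := ha1 j; omega)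
          · -- from T2
            have hy : u.prod • p ∈ Uτ := by
              rw [heq]
              refine hτ _ ?_ q hq
              have := ha1 k; rcases hδ with rfl | rfl <;> omega
            exact mkT2 j u 0 _ (by simp) (fun h => hd _ h hy) (by have := ha1 j; omega)
  obtain ⟨q, hc⟩ := key w hnew hlenw hletw hchw
  rcases hc with ⟨ε', r, hε', hr1, hrlen, heq, hq, -⟩ |
    ⟨k, δ, r, hδ, hr0, hrlen, heq, hq, -⟩ |
    ⟨ε', r, hε', hr1, hrlen, heq, hq, -⟩ |
    ⟨k, δ, r, hδ, hr0, hrlen, heq, hq, -⟩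
  · refine Or.inl ?_
    rw [heq]
    refine hσ _ ?_ q hq
    rcases hε' with rfl | rfl <;> omega
  · refine Or.inl ?_
    rw [heq]
    refine hσ _ ?_ q hq
    have := ha1 k
    rcases hδ with rfl | rfl <;> omega
  · refine Or.inr ?_
    rw [heq]
    refine hτ _ ?_ q hq
    rcases hε' with rfl | rfl <;> omega
  · refine Or.inr ?_
    rw [heq]
    refine hτ _ ?_ q hq
    have := ha1 k
    rcases hδ with rfl | rfl <;> omega

end NS

/-- **North–south dynamics criterion for infinite girth.** -/
theorem infinite_girth_of_north_south {G X : Type*} [Group G] [MulAction G X]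
    (n : ℕ) (γ : Fin n → G) (hgen : Subgroup.closure (Set.range γ) = ⊤)
    (σ τ : G) (Uσ Uτ : Set X)
    (h1σ : ∀ k : ℤ, k ≠ 0 → (σ ^ k) • (Set.univ \ Uσ) ⊆ Uσ)
    (h1τ : ∀ k : ℤ, k ≠ 0 → (τ ^ k) • (Set.univ \ Uτ) ⊆ Uτ)
    (h2 : Uσ ∩ Uτ = ∅)
    (h3στ : ∀ j, (γ j • Uτ) ∩ Uσ = ∅ ∧ ((γ j)⁻¹ • Uτ) ∩ Uσ = ∅)
    (h3τσ : ∀ j, (γ j • Uσ) ∩ Uτ = ∅ ∧ ((γ j)⁻¹ • Uσ) ∩ Uτ = ∅)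
    (h4 : (Set.univ \ ((Uσ ∪ Uτ) ∪
      ⋃ j, (γ j • (Uσ ∪ Uτ) ∪ (γ j)⁻¹ • (Uσ ∪ Uτ)))).Nonempty) :
    ¬ IsCyclic G ∧ groupGirth G = ⊤ := by
  classical
  obtain ⟨p, hp⟩ := h4
  have hpσ : p ∉ Uσ := fun h => hp.2 (Set.mem_union_left _ (Set.mem_union_left _ h))
  have hpτ : p ∉ Uτ := fun h => hp.2 (Set.mem_union_left _ (Set.mem_union_right _ h))
  have hσ' : ∀ s : ℤ, s ≠ 0 → ∀ x : X, x ∉ Uσ → σ ^ s • x ∈ Uσ := fun s hs x hx =>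
    h1σ s hs (Set.smul_mem_smul_set ⟨Set.mem_univ x, hx⟩)
  have hτ' : ∀ s : ℤ, s ≠ 0 → ∀ x : X, x ∉ Uτ → τ ^ s • x ∈ Uτ := fun s hs x hx =>
    h1τ s hs (Set.smul_mem_smul_set ⟨Set.mem_univ x, hx⟩)
  have hd : ∀ x : X, x ∈ Uσ → x ∉ Uτ := by
    intro x hx1 hx2
    have : x ∈ Uσ ∩ Uτ := ⟨hx1, hx2⟩
    rw [h2] at this
    exact this
  have hA : ∀ j, ∀ x : X, x ∈ Uτ → γ j • x ∉ Uσ ∧ (γ j)⁻¹ • x ∉ Uσ := by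
    intro j x hx
    constructor
    · intro h
      have : γ j • x ∈ (γ j • Uτ) ∩ Uσ := ⟨Set.smul_mem_smul_set hx, h⟩
      rw [(h3στ j).1] at this; exact this
    · intro h
      have : (γ j)⁻¹ • x ∈ ((γ j)⁻¹ • Uτ) ∩ Uσ := ⟨Set.smul_mem_smul_set hx, h⟩
      rw [(h3στ j).2] at this; exact this
  have hB : ∀ j, ∀ x : X, x ∈ Uσ → γ j • x ∉ Uτ ∧ (γ j)⁻¹ • x ∉ Uτ := by
    intro j x hx
    constructor
    · intro h
      have : γ j • x ∈ (γ j • Uσ) ∩ Uτ := ⟨Set.smul_mem_smul_set hx, h⟩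
      rw [(h3τσ j).1] at this; exact this
    · intro h
      have : (γ j)⁻¹ • x ∈ ((γ j)⁻¹ • Uσ) ∩ Uτ := ⟨Set.smul_mem_smul_set hx, h⟩
      rw [(h3τσ j).2] at this; exact this
  constructor
  · -- not cyclic
    intro hc
    have hcomm : σ * τ = τ * σ := by
      obtain ⟨g, hg⟩ := hc.exists_generator
      obtain ⟨k, hk⟩ := hg σ
      obtain ⟨l, hl⟩ := hg τ
      rw [← hk, ← hl, ← zpow_add, ← zpow_add, add_comm]
    have ht : τ • p ∈ Uτ := by
      have := hτ' 1 one_ne_zero p hpτ; rwa [zpow_one] at this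
    have hs : σ • p ∈ Uσ := by
      have := hσ' 1 one_ne_zero p hpσ; rwa [zpow_one] at this
    have h1' : σ • τ • p ∈ Uσ := by
      have := hσ' 1 one_ne_zero (τ • p) (fun h => hd _ h ht)
      rwa [zpow_one] at this
    have h2' : τ • σ • p ∈ Uτ := by
      have := hτ' 1 one_ne_zero (σ • p) (hd _ hs)
      rwa [zpow_one] at this
    have he : σ • τ • p = τ • σ • p := by rw [← mul_smul, ← mul_smul, hcomm]
    exact hd _ h1' (he ▸ h2')
  · -- infinite girth
    have main : ∀ M : ℕ, (M : ℕ∞) ≤ groupGirth G := by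
      intro M
      set a : Fin n → ℤ := fun j => 2 * ((M : ℤ) + 1) * ((j : ℤ) + 1) with ha_def
      have ha1 : ∀ j, 2 * (M : ℤ) ≤ a j := by
        intro j
        have hj : (0 : ℤ) ≤ (j : ℤ) := Int.natCast_nonneg _
        have hM0 : (0 : ℤ) ≤ (M : ℤ) := Int.natCast_nonneg _
        simp only [ha_def]
        nlinarith
      have ha2 : ∀ j k, j ≠ k → 2 * (M : ℤ) ≤ a j - a k ∨ 2 * (M : ℤ) ≤ a k - a j := by
        intro j k hjk
        have hM0 : (0 : ℤ) ≤ (M : ℤ) := Int.natCast_nonneg _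
        rcases lt_trichotomy ((j : ℕ) : ℤ) ((k : ℕ) : ℤ) with h | h | h
        · right; simp only [ha_def]; nlinarith
        · exact absurd (Fin.ext (by exact_mod_cast h)) hjk
        · left; simp only [ha_def]; nlinarith
      set gg : Fin n → G := fun j => σ ^ a j * γ j * τ ^ a j with hgg_def
      set S : Finset G := insert σ (insert τ (Finset.image gg Finset.univ)) with hS_def
      have hσin : σ ∈ Subgroup.closure (S : Set G) :=
        Subgroup.subset_closure (by simp [hS_def])
      have hτin : τ ∈ Subgroup.closure (S : Set G) :=
        Subgroup.subset_closure (by simp [hS_def])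
      have hggin : ∀ j, gg j ∈ Subgroup.closure (S : Set G) := fun j =>
        Subgroup.subset_closure (by simp [hS_def])
      have hSgen : Subgroup.closure (S : Set G) = ⊤ := by
        rw [eq_top_iff, ← hgen]
        refine (Subgroup.closure_le _).mpr ?_
        rintro g ⟨j, rfl⟩
        have hid : γ j = σ ^ (-(a j)) * (gg j * τ ^ (-(a j))) := by
          simp only [hgg_def]
          group
        rw [hid]
        exact Subgroup.mul_mem _ (Subgroup.zpow_mem _ hσin _)
          (Subgroup.mul_mem _ (hggin j) (Subgroup.zpow_mem _ hτin _))
      have hbound : (M : ℕ∞) ≤ girthWith (S : Set G) := by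
        refine le_iInf₂ fun w hw => ?_
        obtain ⟨hne, hlet, hch, hprod⟩ := hw
        rw [Nat.cast_le]
        by_contra hlt
        push_neg at hlt
        have hlet' : ∀ g ∈ w, (∃ ε : ℤ, (ε = 1 ∨ ε = -1) ∧ g = σ ^ ε) ∨
            (∃ ε : ℤ, (ε = 1 ∨ ε = -1) ∧ g = τ ^ ε) ∨
            (∃ j, g = gg j) ∨ (∃ j, g = (gg j)⁻¹) := by
          intro g hg
          rcases hlet g hg with h | h
          · simp only [hS_def, Finset.coe_insert, Set.mem_insert_iff, Finset.coe_image,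
              Set.mem_image, Finset.mem_coe, Finset.mem_image, Finset.mem_univ, true_and,
              Finset.coe_univ, Set.mem_univ] at h
            rcases h with h | h | ⟨j, hj⟩
            · exact Or.inl ⟨1, Or.inl rfl, by rw [zpow_one]; exact h⟩
            · exact Or.inr (Or.inl ⟨1, Or.inl rfl, by rw [zpow_one]; exact h⟩)
            · exact Or.inr (Or.inr (Or.inl ⟨j, hj.symm⟩))
          · simp only [hS_def, Finset.coe_insert, Set.mem_insert_iff, Finset.coe_image,
              Set.mem_image, Finset.mem_coe, Finset.mem_image, Finset.mem_univ, true_and,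
              Finset.coe_univ, Set.mem_univ] at h
            rcases h with h | h | ⟨j, hj⟩
            · refine Or.inl ⟨-1, Or.inr rfl, ?_⟩
              rw [zpow_neg_one, ← h, inv_inv]
            · refine Or.inr (Or.inl ⟨-1, Or.inr rfl, ?_⟩)
              rw [zpow_neg_one, ← h, inv_inv]
            · refine Or.inr (Or.inr (Or.inr ⟨j, ?_⟩))
              rw [hj, inv_inv]
        have := ns_key γ σ τ Uσ Uτ p M hσ' hτ' hd hA hB hpσ hpτ a ha1 ha2 gg
          (fun j => rfl) w hne (by exact_mod_cast hlt) hlet' hch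
        rw [hprod, one_smul] at this
        rcases this with h | h
        · exact hpσ h
        · exact hpτ h
      refine le_trans hbound ?_
      exact le_iSup₂ (f := fun (S : Finset G) (_ : S ∈ {S : Finset G |
        Subgroup.closure (S : Set G) = ⊤}) => girthWith (S : Set G)) S hSgen
    rcases eq_or_ne (groupGirth G) ⊤ with h | h
    · exact h
    · exfalso
      lift groupGirth G to ℕ using h with x hx
      have := main (x + 1)
      exact absurd (Nat.cast_le.mp this) (by omega)
end
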